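/- arXiv:1208.1897 — 9 statements merged into one kernel-verified Lean document; each statement's English description precedes it below -/
import Mathlib

section
/- Let V be a left R-module and let X and Y be distinct proper R-submodules of V. There is no path in the intersection graph G(V) between X and Y if and only if X and Y are simple R-submodules of V and V = X ⊕ Y. -/
/-- The vertices of the intersection graph: proper submodules of `V`. -/
def ProperSubmodule (R V : Type*) [Ring R] [AddCommGroup V] [Module R V] :=
  {W : Submodule R V // W ≠ ⊥ ∧ W ≠ ⊤}

/-- The intersection graph of proper submodules of `V`: two distinct proper
submodules are adjacent iff their intersection is nonzero. -/
def intersectionGraph (R V : Type*) [Ring R] [AddCommGroup V] [Module R V] :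
    SimpleGraph (ProperSubmodule R V) where
  Adj U W := U ≠ W ∧ U.1 ⊓ W.1 ≠ ⊥
  symm := by
    constructor
    intro U W h
    exact ⟨h.1.symm, by rw [inf_comm]; exact h.2⟩
  loopless := ⟨fun U h => h.1 rfl⟩

private lemma atom_aux (R V : Type*) [Ring R] [AddCommGroup V] [Module R V]
    (x y : ProperSubmodule R V)
    (hR : ¬ (intersectionGraph R V).Reachable x y)
    (hinf : x.1 ⊓ y.1 = ⊥) : IsAtom x.1 := by
  constructor
  · exact x.2.1
  · intro b hb
    by_contra hb0
    -- consider w = b ⊔ y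
    have hbx : b ≤ x.1 := le_of_lt hb
    have hW_ne_bot : b ⊔ y.1 ≠ ⊥ := fun h => y.2.1 (le_bot_iff.mp (le_sup_right.trans h.le))
    have hW_ne_top : b ⊔ y.1 ≠ ⊤ := by
      intro h
      have := sup_inf_assoc_of_le y.1 hbx  -- (b ⊔ y) ⊓ x = b ⊔ (y ⊓ x)
      rw [h, top_inf_eq, inf_comm, hinf, sup_bot_eq] at this
      exact absurd this.symm (ne_of_lt hb)
    set w : ProperSubmodule R V := ⟨b ⊔ y.1, hW_ne_bot, hW_ne_top⟩ with hw
    have hxw : x ≠ w := by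
      intro h
      have h1 : y.1 ≤ x.1 := by rw [h]; exact le_sup_right
      have h2 : y.1 ≤ x.1 ⊓ y.1 := le_inf h1 le_rfl
      rw [hinf] at h2
      exact y.2.1 (le_bot_iff.mp h2)
    have hwy : w ≠ y := by
      intro h
      have hbY : b ≤ y.1 := by
        have : b ≤ (w : ProperSubmodule R V).1 := le_sup_left
        rwa [h] at this
      exact hb0 (le_bot_iff.mp (hinf ▸ le_inf hbx hbY))
    have adj1 : (intersectionGraph R V).Adj x w := by
      refine ⟨hxw, fun h => hb0 (le_bot_iff.mp ((le_inf hbx le_sup_left).trans h.le))⟩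
    have adj2 : (intersectionGraph R V).Adj w y := by
      refine ⟨hwy, fun h => y.2.1 (le_bot_iff.mp ((le_inf le_sup_right le_rfl).trans h.le))⟩
    exact hR (adj1.reachable.trans adj2.reachable)

theorem stmt0 (R V : Type*) [Ring R] [AddCommGroup V] [Module R V]
    (x y : ProperSubmodule R V) (hxy : x ≠ y) :
    ¬ (intersectionGraph R V).Reachable x y ↔
      IsSimpleModule R x.1 ∧ IsSimpleModule R y.1 ∧
        x.1 ⊓ y.1 = ⊥ ∧ x.1 ⊔ y.1 = ⊤ := by
  constructor
  · intro hR
    have hinf : x.1 ⊓ y.1 = ⊥ := by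
      by_contra h
      exact hR (SimpleGraph.Adj.reachable ⟨hxy, h⟩)
    have hsup : x.1 ⊔ y.1 = ⊤ := by
      by_contra h
      have hC_ne_bot : x.1 ⊔ y.1 ≠ ⊥ :=
        fun h' => x.2.1 (le_bot_iff.mp (le_sup_left.trans h'.le))
      set z : ProperSubmodule R V := ⟨x.1 ⊔ y.1, hC_ne_bot, h⟩ with hz
      have hxz : x ≠ z := by
        intro h'
        have : y.1 ≤ x.1 := by
          have : y.1 ≤ (z : ProperSubmodule R V).1 := le_sup_right
          rwa [← h'] at this
        have h2 : y.1 ≤ x.1 ⊓ y.1 := le_inf this le_rfl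
        rw [hinf] at h2
        exact y.2.1 (le_bot_iff.mp h2)
      have hzy : z ≠ y := by
        intro h'
        have : x.1 ≤ y.1 := by
          have : x.1 ≤ (z : ProperSubmodule R V).1 := le_sup_left
          rwa [h'] at this
        have h2 : x.1 ≤ x.1 ⊓ y.1 := le_inf le_rfl this
        rw [hinf] at h2
        exact x.2.1 (le_bot_iff.mp h2)
      have adj1 : (intersectionGraph R V).Adj x z :=
        ⟨hxz, by rw [inf_eq_left.mpr le_sup_left]; exact x.2.1⟩
      have adj2 : (intersectionGraph R V).Adj z y :=
        ⟨hzy, by rw [inf_eq_right.mpr le_sup_right]; exact y.2.1⟩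
      exact hR (adj1.reachable.trans adj2.reachable)
    refine ⟨(isSimpleModule_iff_isAtom).mpr (atom_aux R V x y hR hinf),
      (isSimpleModule_iff_isAtom).mpr
        (atom_aux R V y x (fun h => hR h.symm) (by rwa [inf_comm])),
      hinf, hsup⟩
  · rintro ⟨hxs, hys, hinf, hsup⟩ hR
    have hxA : IsAtom x.1 := isSimpleModule_iff_isAtom.mp hxs
    have hyA : IsAtom y.1 := isSimpleModule_iff_isAtom.mp hys
    -- get a neighbor of x from the walk
    obtain ⟨p⟩ := hR
    cases p with
    | nil => exact hxy rfl
    | cons h _ =>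
      rename_i w _
      obtain ⟨hne, hI⟩ := h
      -- x ⊓ w ≤ x, nonzero, x atom ⇒ x ≤ w
      have hxw : x.1 ≤ w.1 := by
        rcases (hxA.le_iff.mp inf_le_left : x.1 ⊓ w.1 = ⊥ ∨ x.1 ⊓ w.1 = x.1) with h' | h'
        · exact absurd h' hI
        · exact h' ▸ inf_le_right
      -- w ⊓ y is ⊥ or y
      rcases (hyA.le_iff.mp inf_le_right : w.1 ⊓ y.1 = ⊥ ∨ w.1 ⊓ y.1 = y.1) with h' | h'
      · -- then w = w ⊓ ⊤ = w ⊓ (x ⊔ y) = x ⊔ (w ⊓ y) = x, contradicting hne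
        have := sup_inf_assoc_of_le y.1 hxw  -- (x ⊔ y) ⊓ w = x ⊔ (y ⊓ w)
        rw [hsup, top_inf_eq, inf_comm] at this
        rw [h', sup_bot_eq] at this
        exact hne (Subtype.ext this.symm)
      · -- then y ≤ w and x ≤ w so ⊤ = x ⊔ y ≤ w, contradicting w ≠ ⊤
        have hyw : y.1 ≤ w.1 := h' ▸ inf_le_left
        exact w.2.2 (top_le_iff.mp (hsup.ge.trans (sup_le hxw hyw)))
end

section
/- Let V be a left R-module. If there is a path in the intersection graph G(V) between two distinct proper submodules X and Y, then the distance between X and Y is at most 2. -/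
lemma middleman (R V : Type*) [Ring R] [AddCommGroup V] [Module R V]
    (x y w : ProperSubmodule R V) (hinf : x.1 ⊓ y.1 = ⊥)
    (hadj : (intersectionGraph R V).Adj x w) :
    ∃ u, (intersectionGraph R V).Adj x u ∧ (intersectionGraph R V).Adj u y := by
  -- helper facts
  have hy_not_le_x : ¬ y.1 ≤ x.1 := by
    intro hle
    have h1 : y.1 ≤ x.1 ⊓ y.1 := le_inf hle le_rfl
    rw [hinf] at h1
    exact y.2.1 (le_bot_iff.mp h1)
  have hx_not_le_y : ¬ x.1 ≤ y.1 := by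
    intro hle
    have h1 : x.1 ≤ x.1 ⊓ y.1 := le_inf le_rfl hle
    rw [hinf] at h1
    exact x.2.1 (le_bot_iff.mp h1)
  by_cases hsup : x.1 ⊔ y.1 = ⊤
  · by_cases hwy : w.1 ⊓ y.1 = ⊥
    · -- middleman: (x ⊓ w) ⊔ y
      have hSbot : x.1 ⊓ w.1 ≠ ⊥ := hadj.2
      have hyw : y.1 ⊓ w.1 = ⊥ := by rw [inf_comm]; exact hwy
      have hSx : x.1 ⊓ w.1 ≠ x.1 := by
        intro hEq
        have hle : x.1 ≤ w.1 := by rw [← hEq]; exact inf_le_right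
        have h2 := sup_inf_assoc_of_le (x := x.1) y.1 hle
        rw [hsup, top_inf_eq, hyw, sup_bot_eq] at h2
        exact hadj.1 (Subtype.ext h2.symm)
      have hSlex : x.1 ⊓ w.1 ≤ x.1 := inf_le_left
      have hUtop : (x.1 ⊓ w.1) ⊔ y.1 ≠ ⊤ := by
        intro hEq
        apply hSx
        have h2 := sup_inf_assoc_of_le (x := x.1 ⊓ w.1) y.1 hSlex
        rw [hEq, top_inf_eq, inf_comm y.1 x.1, hinf, sup_bot_eq] at h2
        exact h2.symm
      have hUbot : (x.1 ⊓ w.1) ⊔ y.1 ≠ ⊥ := by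
        intro hEq
        exact y.2.1 (le_bot_iff.mp (le_trans le_sup_right hEq.le))
      refine ⟨⟨(x.1 ⊓ w.1) ⊔ y.1, hUbot, hUtop⟩, ⟨?_, ?_⟩, ⟨?_, ?_⟩⟩
      · intro hEq
        have h2 := congrArg Subtype.val hEq
        simp only at h2
        exact hy_not_le_x (by rw [h2]; exact le_sup_right)
      · intro hEq
        exact hSbot (le_bot_iff.mp (le_trans (le_inf hSlex le_sup_left) hEq.le))
      · intro hEq
        have h2 := congrArg Subtype.val hEq
        simp only at h2
        have h3 : x.1 ⊓ w.1 ≤ y.1 := by rw [← h2]; exact le_sup_left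
        have h4 : x.1 ⊓ w.1 ≤ x.1 ⊓ y.1 := le_inf hSlex h3
        rw [hinf] at h4
        exact hSbot (le_bot_iff.mp h4)
      · intro hEq
        exact y.2.1 (le_bot_iff.mp (le_trans (le_inf le_sup_right le_rfl) hEq.le))
    · -- w itself is a middleman
      refine ⟨w, hadj, ?_, hwy⟩
      intro hEq
      exact hadj.2 (by rw [hEq, hinf])
  · -- middleman: x ⊔ y
    have hUbot : x.1 ⊔ y.1 ≠ ⊥ := by
      intro hEq
      exact x.2.1 (le_bot_iff.mp (le_trans le_sup_left hEq.le))
    refine ⟨⟨x.1 ⊔ y.1, hUbot, hsup⟩, ⟨?_, ?_⟩, ⟨?_, ?_⟩⟩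
    · intro hEq
      have h2 := congrArg Subtype.val hEq
      simp only at h2
      exact hy_not_le_x (by rw [h2]; exact le_sup_right)
    · intro hEq
      exact x.2.1 (le_bot_iff.mp (le_trans (le_inf le_rfl le_sup_left) hEq.le))
    · intro hEq
      have h2 := congrArg Subtype.val hEq
      simp only at h2
      exact hx_not_le_y (by rw [← h2]; exact le_sup_left)
    · intro hEq
      exact y.2.1 (le_bot_iff.mp (le_trans (le_inf le_sup_right le_rfl) hEq.le))

theorem stmt1 (R V : Type*) [Ring R] [AddCommGroup V] [Module R V]
    (x y : ProperSubmodule R V) (hxy : x ≠ y)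
    (h : (intersectionGraph R V).Reachable x y) :
    (intersectionGraph R V).dist x y ≤ 2 := by
  by_cases hinf : x.1 ⊓ y.1 = ⊥
  · obtain ⟨p⟩ := h
    cases p with
    | nil => exact absurd rfl hxy
    | cons hadj q =>
      obtain ⟨u, h1, h2⟩ := middleman R V x y _ hinf hadj
      have hd := SimpleGraph.dist_le
        (SimpleGraph.Walk.cons h1 (SimpleGraph.Walk.cons h2 SimpleGraph.Walk.nil))
      simpa using hd
  · have hAdj : (intersectionGraph R V).Adj x y := ⟨hxy, hinf⟩
    have := SimpleGraph.dist_eq_one_iff_adj.mpr hAdj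
    omega
end

section
/- If the intersection graph G(V) has at least one edge, then G(V) is connected. -/
/-- Two vertices with nonzero intersection are reachable from one another. -/
lemma reach_of_inf_ne_bot (R V : Type*) [Ring R] [AddCommGroup V] [Module R V]
    (U W : ProperSubmodule R V) (hUW : U.1 ⊓ W.1 ≠ ⊥) :
    (intersectionGraph R V).Reachable U W := by
  by_cases hEq : U = W
  · exact hEq ▸ SimpleGraph.Reachable.refl U
  · exact SimpleGraph.Adj.reachable ⟨hEq, hUW⟩

theorem stmt3 (R V : Type*) [Ring R] [AddCommGroup V] [Module R V]
    (h : ∃ x y : ProperSubmodule R V, (intersectionGraph R V).Adj x y) :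
    (intersectionGraph R V).Connected := by
  obtain ⟨x, y, hxy⟩ := h
  obtain ⟨hne, hinf⟩ := hxy
  have hzle : x.1 ⊓ y.1 ≤ x.1 := inf_le_left
  have hzley : x.1 ⊓ y.1 ≤ y.1 := inf_le_right
  have hztop : x.1 ⊓ y.1 ≠ ⊤ := by
    intro ht; exact x.2.2 (top_le_iff.mp (ht.symm.trans_le hzle))
  set z : ProperSubmodule R V := ⟨x.1 ⊓ y.1, hinf, hztop⟩ with hz
  -- z is reachable to x
  have hzx : (intersectionGraph R V).Reachable z x := by
    apply reach_of_inf_ne_bot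
    rwa [inf_eq_left.mpr hzle]
  -- every vertex reaches x
  have key : ∀ A : ProperSubmodule R V, (intersectionGraph R V).Reachable A x := by
    intro A
    by_cases hAz : A.1 ⊓ z.1 ≠ ⊥
    · exact (reach_of_inf_ne_bot R V A z hAz).trans hzx
    push_neg at hAz
    by_cases hS : A.1 ⊔ z.1 ≠ ⊤
    · -- go through A ⊔ z
      have hSbot : A.1 ⊔ z.1 ≠ ⊥ := fun hb => A.2.1 (by
        have := le_sup_left (a := A.1) (b := z.1)
        rw [hb] at this; exact le_bot_iff.mp this)
      set S : ProperSubmodule R V := ⟨A.1 ⊔ z.1, hSbot, hS⟩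
      have h1 : (intersectionGraph R V).Reachable A S := by
        apply reach_of_inf_ne_bot
        have : A.1 ⊓ S.1 = A.1 := inf_eq_left.mpr le_sup_left
        rw [this]; exact A.2.1
      have h2 : (intersectionGraph R V).Reachable S z := by
        apply reach_of_inf_ne_bot
        have : S.1 ⊓ z.1 = z.1 := inf_eq_right.mpr le_sup_right
        rw [this]; exact hinf
      exact h1.trans (h2.trans hzx)
    · push_neg at hS
      -- A ⊔ z = ⊤, A ⊓ z = ⊥; use modularity
      have hxmod : x.1 = z.1 ⊔ (A.1 ⊓ x.1) := by
        have := sup_inf_assoc_of_le (x := z.1) (A.1) (z := x.1) hzle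
        rw [sup_comm, hS, top_inf_eq] at this
        exact this
      have hymod : y.1 = z.1 ⊔ (A.1 ⊓ y.1) := by
        have := sup_inf_assoc_of_le (x := z.1) (A.1) (z := y.1) hzley
        rw [sup_comm, hS, top_inf_eq] at this
        exact this
      by_cases hAx : A.1 ⊓ x.1 ≠ ⊥
      · exact reach_of_inf_ne_bot R V A x hAx
      push_neg at hAx
      rw [hAx, sup_bot_eq] at hxmod
      by_cases hAy : A.1 ⊓ y.1 ≠ ⊥
      · exact (reach_of_inf_ne_bot R V A y hAy).trans
          (SimpleGraph.Adj.reachable ⟨hne.symm, by rw [inf_comm]; exact hinf⟩)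
      push_neg at hAy
      rw [hAy, sup_bot_eq] at hymod
      exact absurd (Subtype.ext (hxmod.trans hymod.symm)) hne
  have : Nonempty (ProperSubmodule R V) := ⟨x⟩
  exact ⟨fun A B => (key A).trans (key B).symm⟩
end

section
/- The intersection graph G(V) has no edges if and only if V has a composition series of length at most 2. -/
/-- `V` has a composition series (from `⊥` to `⊤`) of length `n`. -/
def HasCompositionSeriesOfLength (R V : Type*) [Ring R] [AddCommGroup V] [Module R V]
    (n : ℕ) : Prop :=
  ∃ s : RelSeries {p : Submodule R V × Submodule R V | p.1 ⋖ p.2},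
    s.head = ⊥ ∧ s.last = ⊤ ∧ s.length = n

/-- If `⊥ ⋖ M ⋖ ⊤`, then the intersection graph has no edges. -/
lemma len2_noedge {R V : Type*} [Ring R] [AddCommGroup V] [Module R V]
    (M : Submodule R V) (h1 : (⊥ : Submodule R V) ⋖ M) (h2 : M ⋖ (⊤ : Submodule R V)) :
    ∀ x y : ProperSubmodule R V, ¬ (intersectionGraph R V).Adj x y := by
  have key : ∀ U : Submodule R V, U ≠ ⊥ → U ≠ ⊤ → U ≠ M → U ⊓ M = ⊥ ∧ U ⊔ M = ⊤ := by
    intro U hUb hUt hUM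
    constructor
    · by_contra hne
      have hle : U ⊓ M ≤ M := inf_le_right
      have : U ⊓ M = M := by
        rcases lt_or_eq_of_le hle with hlt | heq
        · exact absurd hlt (h1.2 (bot_lt_iff_ne_bot.2 hne))
        · exact heq
      have hMU : M ≤ U := this ▸ inf_le_left
      have hMltU : M < U := lt_of_le_of_ne hMU (fun h => hUM h.symm)
      exact (h2.2 hMltU) (lt_top_iff_ne_top.2 hUt)
    · by_contra hne
      have hle : M ≤ U ⊔ M := le_sup_right
      rcases lt_or_eq_of_le hle with hlt | heq
      · exact (h2.2 hlt) (lt_top_iff_ne_top.2 hne)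
      · have hUM' : U ≤ M := sup_eq_right.1 heq.symm
        have : U < M := lt_of_le_of_ne hUM' hUM
        exact (h1.2 (bot_lt_iff_ne_bot.2 hUb)) this
  have simple : ∀ U : Submodule R V, U ≠ ⊥ → U ≠ ⊤ → (⊥ : Submodule R V) ⋖ U := by
    intro U hUb hUt
    by_cases hUM : U = M
    · exact hUM ▸ h1
    obtain ⟨hinf, hsup⟩ := key U hUb hUt hUM
    refine ⟨bot_lt_iff_ne_bot.2 hUb, ?_⟩
    intro c hc1 hc2
    have hcU : c ≤ U := hc2.le
    have hcM : c ⊔ M = ⊤ := by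
      have hle : M ≤ c ⊔ M := le_sup_right
      rcases lt_or_eq_of_le hle with hlt | heq
      · by_contra hne
        exact (h2.2 hlt) (lt_top_iff_ne_top.2 hne)
      · have : c ≤ M := sup_eq_right.1 heq.symm
        have : c ≤ U ⊓ M := le_inf hcU this
        rw [hinf] at this
        exact absurd (le_bot_iff.1 this) (ne_of_gt hc1)
    have : (c ⊔ M) ⊓ U = c ⊔ M ⊓ U := sup_inf_assoc_of_le M hcU
    rw [hcM, top_inf_eq, inf_comm, hinf, sup_bot_eq] at this
    exact hc2.ne this.symm
  intro x y hadj
  obtain ⟨hne, hinf⟩ := hadj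
  have hx := simple x.1 x.2.1 x.2.2
  have hy := simple y.1 y.2.1 y.2.2
  have hxy : x.1 ≤ y.1 := by
    have hle : x.1 ⊓ y.1 ≤ x.1 := inf_le_left
    rcases lt_or_eq_of_le hle with hlt | heq
    · exact absurd hlt (hx.2 (bot_lt_iff_ne_bot.2 hinf))
    · exact heq ▸ inf_le_right
  have hyx : y.1 ≤ x.1 := by
    have hle : y.1 ⊓ x.1 ≤ y.1 := inf_le_left
    have hinf' : y.1 ⊓ x.1 ≠ ⊥ := by rwa [inf_comm]
    rcases lt_or_eq_of_le hle with hlt | heq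
    · exact absurd hlt (hy.2 (bot_lt_iff_ne_bot.2 hinf'))
    · exact heq ▸ inf_le_right
  exact hne (Subtype.ext (le_antisymm hxy hyx))

theorem stmt4 (R V : Type*) [Ring R] [AddCommGroup V] [Module R V] :
    (∀ x y : ProperSubmodule R V, ¬ (intersectionGraph R V).Adj x y) ↔
      ∃ n ≤ 2, HasCompositionSeriesOfLength R V n := by
  constructor
  · intro h
    by_cases hbt : (⊥ : Submodule R V) = ⊤
    · exact ⟨0, by norm_num, RelSeries.singleton _ ⊥, rfl, hbt, rfl⟩
    · by_cases hex : ∃ W : Submodule R V, W ≠ ⊥ ∧ W ≠ ⊤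
      · obtain ⟨W, hW1, hW2⟩ := hex
        have h1 : (⊥ : Submodule R V) ⋖ W := by
          refine ⟨bot_lt_iff_ne_bot.2 hW1, ?_⟩
          intro c hc1 hc2
          refine h ⟨c, ne_of_gt hc1, ne_top_of_lt hc2⟩ ⟨W, hW1, hW2⟩ ?_
          refine ⟨fun heq => hc2.ne (congrArg (fun z : ProperSubmodule R V => z.1) heq), ?_⟩
          rw [inf_eq_left.2 hc2.le]
          exact ne_of_gt hc1
        have h2 : W ⋖ (⊤ : Submodule R V) := by
          refine ⟨lt_top_iff_ne_top.2 hW2, ?_⟩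
          intro c hc1 hc2
          refine h ⟨W, hW1, hW2⟩ ⟨c, ?_, ne_of_lt hc2⟩ ?_
          · intro hc
            rw [hc] at hc1
            exact absurd hc1 (by simp)
          refine ⟨fun heq => hc1.ne (congrArg (fun z : ProperSubmodule R V => z.1) heq), ?_⟩
          rw [inf_eq_left.2 hc1.le]
          exact hW1
        exact ⟨2, by norm_num,
          ((RelSeries.singleton _ (⊥ : Submodule R V)).snoc W (by simpa using h1)).snoc ⊤ (by
            rwa [RelSeries.last_snoc]), by
            simp [RelSeries.head_snoc], by simp [RelSeries.last_snoc], by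
            simp [RelSeries.snoc_length]⟩
      · push_neg at hex
        have hcov : (⊥ : Submodule R V) ⋖ ⊤ := by
          refine ⟨bot_lt_iff_ne_bot.2 (Ne.symm hbt), ?_⟩
          intro c hc1 hc2
          exact (ne_of_lt hc2) (hex c (ne_of_gt hc1))
        exact ⟨1, by norm_num, (RelSeries.singleton _ (⊥ : Submodule R V)).snoc ⊤ (by simpa using hcov),
          by simp [RelSeries.head_snoc], by simp [RelSeries.last_snoc], rfl⟩
  · rintro ⟨n, hn, s, hhead, hlast, hlen⟩
    interval_cases n
    · -- length 0 : ⊥ = ⊤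
      have : s.head = s.last := by
        unfold RelSeries.head RelSeries.last
        congr 1
        ext
        simp [hlen]
      rw [hhead, hlast] at this
      intro x y _
      exact x.2.1 (le_bot_iff.1 (le_top.trans this.ge))
    · -- length 1 : ⊥ ⋖ ⊤
      have hstep := s.step ⟨0, by omega⟩
      have h0 : s (Fin.castSucc ⟨0, by omega⟩) = ⊥ := by
        rw [← hhead]; congr 1
      have h1 : s (Fin.succ ⟨0, by omega⟩) = ⊤ := by
        rw [← hlast]; congr 1; apply Fin.ext; simp [hlen]
      rw [h0, h1] at hstep
      intro x y _
      exact absurd (lt_top_iff_ne_top.2 x.2.2) (hstep.2 (bot_lt_iff_ne_bot.2 x.2.1))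
    · -- length 2
      have hs0 := s.step ⟨0, by omega⟩
      have hs1 := s.step ⟨1, by omega⟩
      have h0 : s (Fin.castSucc ⟨0, by omega⟩) = ⊥ := by
        rw [← hhead]; congr 1
      have h2 : s (Fin.succ ⟨1, by omega⟩) = ⊤ := by
        rw [← hlast]; congr 1; apply Fin.ext; simp [hlen]
      have hmid : Fin.succ (⟨0, by omega⟩ : Fin s.length) =
          Fin.castSucc ⟨1, by omega⟩ := by apply Fin.ext; simp
      rw [h0, hmid] at hs0
      rw [h2] at hs1
      exact len2_noedge _ hs0 hs1
end

section
/- G(V) has a cut vertex if and only if the socle of V is a direct sum of two simple R-modules and the socle is a maximal R-submodule of V. Moreover, in this case the socle of V is the unique cut vertex of G(V). -/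
/-- A cut vertex: a vertex `v` such that some two vertices distinct from `v` are
connected in `G` but not after deleting `v` (so deleting `v` increases the
number of connected components). -/
def SimpleGraph.IsCutVertex {α : Type*} (G : SimpleGraph α) (v : α) : Prop :=
  ∃ (a b : α) (ha : a ≠ v) (hb : b ≠ v), G.Reachable a b ∧
    ¬ (G.induce {u | u ≠ v}).Reachable ⟨a, ha⟩ ⟨b, hb⟩

/-- The socle of a module: the sum of all its simple submodules. -/
def moduleSocle (R V : Type*) [Ring R] [AddCommGroup V] [Module R V] : Submodule R V :=
  sSup {W : Submodule R V | IsSimpleModule R W}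

/- ---------- auxiliary lemmas ---------- -/

section Aux

lemma sub_between {α : Type*} [Lattice α] [IsModularLattice α] [OrderBot α]
    {S T W : α} (hT : IsAtom T) (hSW : S ≤ W) (hW : W ≤ S ⊔ T) : W = S ∨ W = S ⊔ T := by
  have h : W = S ⊔ (T ⊓ W) := by
    rw [← sup_inf_assoc_of_le T hSW, inf_eq_right.mpr hW]
  rcases (hT.le_iff.mp inf_le_left : T ⊓ W = ⊥ ∨ T ⊓ W = T) with h2 | h2 <;>
    rw [h2] at h
  · exact Or.inl (by simpa using h)
  · exact Or.inr h

lemma atom_of_le_sup_atoms {α : Type*} [Lattice α] [IsModularLattice α] [OrderBot α]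
    {S T u : α} (hS : IsAtom S) (hT : IsAtom T) (hu : u ≤ S ⊔ T) (h0 : u ≠ ⊥)
    (h1 : u ≠ S ⊔ T) : IsAtom u := by
  by_cases hSu : S ≤ u
  · rcases sub_between hT hSu hu with h | h
    · exact h ▸ hS
    · exact absurd h h1
  by_cases hTu : T ≤ u
  · rcases sub_between hS hTu (by rwa [sup_comm]) with h | h
    · exact h ▸ hT
    · rw [sup_comm] at h; exact absurd h h1
  · refine ⟨h0, fun u' hu' => ?_⟩
    by_contra h0'
    have hSu' : S ⊔ u' ≤ S ⊔ T := sup_le le_sup_left (hu'.le.trans hu)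
    have hSub : S ⊓ u = ⊥ := (hS.le_iff.mp inf_le_left).resolve_right
      (fun hh => hSu (by rw [← hh]; exact inf_le_right))
    rcases sub_between hT le_sup_left hSu' with h | h
    · have : u' ≤ S ⊓ u := le_inf (le_sup_right.trans h.le) hu'.le
      exact h0' (le_bot_iff.mp (hSub ▸ this))
    · have : u = u' := by
        calc u = (S ⊔ T) ⊓ u := (inf_eq_right.mpr hu).symm
        _ = (u' ⊔ S) ⊓ u := by rw [← h, sup_comm]
        _ = u' ⊔ (S ⊓ u) := sup_inf_assoc_of_le S hu'.le
        _ = u' := by rw [hSub, sup_bot_eq]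
      exact hu'.ne this.symm

lemma walk_decomp {α : Type*} {G : SimpleGraph α} (v : α) {a b : α} (w : G.Walk a b)
    (hb : b ≠ v) :
    (a = v → ∃ y, ∃ hy : y ≠ v, G.Adj v y ∧
      (G.induce {u | u ≠ v}).Reachable ⟨y, hy⟩ ⟨b, hb⟩) ∧
    (∀ ha : a ≠ v, (G.induce {u | u ≠ v}).Reachable ⟨a, ha⟩ ⟨b, hb⟩ ∨
      ∃ y, ∃ hy : y ≠ v, G.Adj v y ∧ (G.induce {u | u ≠ v}).Reachable ⟨y, hy⟩ ⟨b, hb⟩) := by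
  induction w with
  | nil => exact ⟨fun h => absurd h hb, fun ha => Or.inl (SimpleGraph.Reachable.refl _)⟩
  | @cons a a' b h w ih =>
    by_cases ha' : a' = v
    · constructor
      · intro hav; exact absurd (hav.trans ha'.symm) h.ne
      · intro ha
        exact Or.inr ((ih hb).1 ha')
    · have hnext := (ih hb).2 ha'
      constructor
      · intro hav
        subst hav
        rcases hnext with hr | ⟨y, hy, hadj, hr⟩
        · exact ⟨a', ha', h, hr⟩
        · exact ⟨y, hy, hadj, hr⟩
      · intro ha
        rcases hnext with hr | ⟨y, hy, hadj, hr⟩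
        · exact Or.inl ((SimpleGraph.Adj.reachable
            (by simpa using h : (G.induce {u | u ≠ v}).Adj ⟨a, ha⟩ ⟨a', ha'⟩)).trans hr)
        · exact Or.inr ⟨y, hy, hadj, hr⟩

lemma eq_of_reachable {β γ : Type*} {H : SimpleGraph β} (g : β → γ)
    (hg : ∀ x y, H.Adj x y → g x = g y) {x y} (h : H.Reachable x y) : g x = g y := by
  obtain ⟨w⟩ := h
  induction w with
  | nil => rfl
  | cons h w ih => exact (hg _ _ h).trans ih

variable {R V : Type*} [Ring R] [AddCommGroup V] [Module R V]

lemma ig_adj {U W : ProperSubmodule R V} (h1 : U ≠ W) (h2 : U.1 ⊓ W.1 ≠ ⊥) :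
    (intersectionGraph R V).Adj U W := ⟨h1, h2⟩

lemma reach_aux {v a b : ProperSubmodule R V} (ha : a ≠ v) (hb : b ≠ v)
    (h : a.1 ⊓ b.1 ≠ ⊥) :
    ((intersectionGraph R V).induce {u | u ≠ v}).Reachable ⟨a, ha⟩ ⟨b, hb⟩ := by
  by_cases hab : a = b
  · subst hab; exact SimpleGraph.Reachable.refl _
  · exact SimpleGraph.Adj.reachable (by simpa using ig_adj hab h)

/-- From a cut vertex, extract two separated neighbours of `v`. -/
lemma cut_neighbors (v : ProperSubmodule R V)
    (hv : (intersectionGraph R V).IsCutVertex v) :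
    ∃ (x y : ProperSubmodule R V) (hx : x ≠ v) (hy : y ≠ v),
      v.1 ⊓ x.1 ≠ ⊥ ∧ v.1 ⊓ y.1 ≠ ⊥ ∧
      ¬ ((intersectionGraph R V).induce {u | u ≠ v}).Reachable ⟨x, hx⟩ ⟨y, hy⟩ := by
  obtain ⟨a, b, ha, hb, ⟨w⟩, hnr⟩ := hv
  rcases (walk_decomp v w hb).2 ha with hr | ⟨y, hy, hady, hry⟩
  · exact absurd hr hnr
  rcases (walk_decomp v w.reverse ha).2 hb with hr | ⟨x, hx, hadx, hrx⟩
  · exact absurd hr.symm hnr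
  refine ⟨x, y, hx, hy, hadx.2, hady.2, fun h => hnr (hrx.symm.trans (h.trans hry))⟩

end Aux
section Main

variable {R V : Type*} [Ring R] [AddCommGroup V] [Module R V]

lemma not_v_le {v x y : ProperSubmodule R V} (hx : x ≠ v) (hy : y ≠ v)
    (hvy : v.1 ⊓ y.1 ≠ ⊥)
    (hsep : ¬ ((intersectionGraph R V).induce {u | u ≠ v}).Reachable ⟨x, hx⟩ ⟨y, hy⟩) :
    ¬ v.1 ≤ x.1 := by
  intro hle
  by_cases hvy' : v.1 ≤ y.1
  · exact hsep (reach_aux hx hy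
      (fun h => v.2.1 (le_bot_iff.mp ((le_inf hle hvy').trans h.le))))
  · have hm0 : y.1 ⊓ v.1 ≠ ⊥ := by rwa [inf_comm]
    have hmt : y.1 ⊓ v.1 ≠ ⊤ := fun h => v.2.2 (top_le_iff.mp (h.symm.trans_le inf_le_right))
    set m : ProperSubmodule R V := ⟨y.1 ⊓ v.1, hm0, hmt⟩ with hmdef
    have hm : m ≠ v := fun h => hvy' (inf_eq_right.mp (congrArg Subtype.val h))
    have r1 : ((intersectionGraph R V).induce {u | u ≠ v}).Reachable ⟨x, hx⟩ ⟨m, hm⟩ :=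
      reach_aux hx hm (by
        rw [inf_eq_right.mpr (show m.1 ≤ x.1 from le_trans inf_le_right hle)]
        exact hm0)
    have r2 : ((intersectionGraph R V).induce {u | u ≠ v}).Reachable ⟨m, hm⟩ ⟨y, hy⟩ :=
      reach_aux hm hy (by
        rw [inf_eq_left.mpr (show m.1 ≤ y.1 from inf_le_left)]
        exact hm0)
    exact hsep (r1.trans r2)

/-- Main structure lemma: a cut vertex is the socle, a coatom, and a direct sum of
two atoms. -/
lemma cut_structure (v : ProperSubmodule R V)
    (hv : (intersectionGraph R V).IsCutVertex v) :
    ∃ c d : Submodule R V, IsAtom c ∧ IsAtom d ∧ c ⊓ d = ⊥ ∧ c ⊔ d = v.1 ∧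
      IsCoatom v.1 ∧ v.1 = moduleSocle R V := by
  classical
  obtain ⟨x, y, hx, hy, hvx, hvy, hsep⟩ := cut_neighbors v hv
  have hxy_ne : x ≠ y := fun h => hsep (h ▸ SimpleGraph.Reachable.refl _)
  have hnx : ¬ v.1 ≤ x.1 := not_v_le hx hy hvy hsep
  have hny : ¬ v.1 ≤ y.1 := not_v_le hy hx hvx (fun h => hsep h.symm)
  -- the two atoms
  have hc0 : x.1 ⊓ v.1 ≠ ⊥ := by rwa [inf_comm] at hvx
  have hd0 : y.1 ⊓ v.1 ≠ ⊥ := by rwa [inf_comm] at hvy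
  set c : ProperSubmodule R V :=
    ⟨x.1 ⊓ v.1, hc0, fun h => v.2.2 (top_le_iff.mp (h.symm.trans_le inf_le_right))⟩ with hcdef
  set d : ProperSubmodule R V :=
    ⟨y.1 ⊓ v.1, hd0, fun h => v.2.2 (top_le_iff.mp (h.symm.trans_le inf_le_right))⟩ with hddef
  have hcv : c ≠ v := fun h => hnx (inf_eq_right.mp (congrArg Subtype.val h))
  have hdv : d ≠ v := fun h => hny (inf_eq_right.mp (congrArg Subtype.val h))
  have hcle : c.1 ≤ v.1 := inf_le_right
  have hdle : d.1 ≤ v.1 := inf_le_right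
  have hxc : x.1 ⊓ c.1 = c.1 := inf_eq_right.mpr inf_le_left
  have hdy : d.1 ⊓ y.1 = d.1 := inf_eq_left.mpr inf_le_left
  have hxy : x.1 ⊓ y.1 = ⊥ := by
    by_contra h
    exact hsep (reach_aux hx hy h)
  have hcd : c.1 ⊓ d.1 = ⊥ :=
    le_bot_iff.mp ((inf_le_inf inf_le_left inf_le_left).trans hxy.le)
  -- the key separation fact
  have H : ∀ m : ProperSubmodule R V, m ≠ v → m.1 ⊓ c.1 ≠ ⊥ → m.1 ⊓ d.1 ≠ ⊥ → False := by
    intro m hm h1 h2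
    refine hsep (((reach_aux hx hcv (by rw [hxc]; exact hc0)).trans
      (reach_aux hcv hm (by rwa [inf_comm]))).trans
      ((reach_aux hm hdv h2).trans (reach_aux hdv hy (by rw [hdy]; exact hd0))))
  -- c ⊔ d = v
  have hsuple : c.1 ⊔ d.1 ≤ v.1 := sup_le hcle hdle
  have hsup : c.1 ⊔ d.1 = v.1 := by
    by_contra hne
    have hm0 : c.1 ⊔ d.1 ≠ ⊥ := fun h => hc0 (le_bot_iff.mp (le_sup_left.trans h.le))
    have hmt : c.1 ⊔ d.1 ≠ ⊤ := fun h => v.2.2 (top_le_iff.mp (h.symm.trans_le hsuple))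
    exact H ⟨c.1 ⊔ d.1, hm0, hmt⟩ (fun h => hne (congrArg Subtype.val h))
      (by rw [inf_eq_right.mpr (le_sup_left : c.1 ≤ _)]; exact hc0)
      (by rw [inf_eq_right.mpr (le_sup_right : d.1 ≤ _)]; exact hd0)
  -- atoms
  have atomstep : ∀ (c d : ProperSubmodule R V), c ≠ v → d ≠ v →
      (∀ m : ProperSubmodule R V, m ≠ v → m.1 ⊓ c.1 ≠ ⊥ → m.1 ⊓ d.1 ≠ ⊥ → False) →
      c.1 ⊓ d.1 = ⊥ → c.1 ≤ v.1 → d.1 ≤ v.1 → c.1 ⊔ d.1 = v.1 → IsAtom c.1 := by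
    intro c d hcv hdv H hcd hcle hdle hsup
    refine ⟨c.2.1, fun c' hc' => ?_⟩
    by_contra h0'
    by_cases hcase : c' ⊔ d.1 = v.1
    · have : c.1 = c' := by
        calc c.1 = v.1 ⊓ c.1 := (inf_eq_right.mpr hcle).symm
        _ = (c' ⊔ d.1) ⊓ c.1 := by rw [hcase]
        _ = c' ⊔ (d.1 ⊓ c.1) := sup_inf_assoc_of_le d.1 hc'.le
        _ = c' := by rw [inf_comm, hcd, sup_bot_eq]
      exact hc'.ne this.symm
    · have hle : c' ⊔ d.1 ≤ v.1 := sup_le (hc'.le.trans hcle) hdle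
      exact H ⟨c' ⊔ d.1, fun h => d.2.1 (le_bot_iff.mp (le_sup_right.trans h.le)),
          fun h => v.2.2 (top_le_iff.mp (h.symm.trans_le hle))⟩
        (fun h => hcase (congrArg Subtype.val h))
        (fun h => h0' (le_bot_iff.mp ((le_inf le_sup_left hc'.le).trans h.le)))
        (by rw [inf_eq_right.mpr (le_sup_right : d.1 ≤ _)]; exact d.2.1)
  have hcatom : IsAtom c.1 := atomstep c d hcv hdv H hcd hcle hdle hsup
  have hdatom : IsAtom d.1 := atomstep d c hdv hcv
    (fun m hm h1 h2 => H m hm h2 h1) (by rw [inf_comm]; exact hcd) hdle hcle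
    (by rw [sup_comm]; exact hsup)
  -- coatom
  have hcoatom : IsCoatom v.1 := by
    refine ⟨v.2.2, fun w hw => ?_⟩
    by_contra hwt
    exact H ⟨w, fun h => v.2.1 (le_bot_iff.mp (hw.le.trans h.le)), hwt⟩
      (fun h => hw.ne' (congrArg Subtype.val h))
      (by rw [inf_eq_right.mpr (hcle.trans hw.le)]; exact hc0)
      (by rw [inf_eq_right.mpr (hdle.trans hw.le)]; exact hd0)
  -- all atoms below v
  have hatomle : ∀ U : Submodule R V, IsAtom U → U ≤ v.1 := by
    intro U hU
    by_contra hUv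
    have hUv0 : U ⊓ v.1 = ⊥ := (hU.le_iff.mp inf_le_left).resolve_right
      (fun h => hUv (inf_eq_left.mp h))
    have hvnec : v.1 = c.1 → False := by
      intro h
      have hdc : d.1 ≤ c.1 := hdle.trans h.le
      exact d.2.1 (le_bot_iff.mp ((le_inf hdc le_rfl).trans hcd.le))
    have hvned : v.1 = d.1 → False := by
      intro h
      have hcd' : c.1 ≤ d.1 := hcle.trans h.le
      exact c.2.1 (le_bot_iff.mp ((le_inf le_rfl hcd').trans hcd.le))
    have hpv : (U ⊔ c.1) ⊓ v.1 = c.1 := by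
      rw [sup_comm, sup_inf_assoc_of_le U hcle, hUv0, sup_bot_eq]
    have hqv : (U ⊔ d.1) ⊓ v.1 = d.1 := by
      rw [sup_comm, sup_inf_assoc_of_le U hdle, hUv0, sup_bot_eq]
    have hpt : U ⊔ c.1 ≠ ⊤ := fun h => hvnec (by rw [← hpv, h, top_inf_eq])
    have hqt : U ⊔ d.1 ≠ ⊤ := fun h => hvned (by rw [← hqv, h, top_inf_eq])
    set p : ProperSubmodule R V :=
      ⟨U ⊔ c.1, fun h => hc0 (le_bot_iff.mp (le_sup_right.trans h.le)), hpt⟩ with hpdef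
    set q : ProperSubmodule R V :=
      ⟨U ⊔ d.1, fun h => hd0 (le_bot_iff.mp (le_sup_right.trans h.le)), hqt⟩ with hqdef
    have hp : p ≠ v := by
      intro h
      apply hvnec
      rw [← hpv, show U ⊔ c.1 = v.1 from congrArg Subtype.val h, inf_idem]
    have hq : q ≠ v := by
      intro h
      apply hvned
      rw [← hqv, show U ⊔ d.1 = v.1 from congrArg Subtype.val h, inf_idem]
    have r1 := reach_aux hx hcv (show x.1 ⊓ c.1 ≠ ⊥ by rw [hxc]; exact hc0)
    have r2 := reach_aux hcv hp (show c.1 ⊓ p.1 ≠ ⊥ by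
      rw [inf_eq_left.mpr (le_sup_right : c.1 ≤ p.1)]; exact hc0)
    have r3 := reach_aux hp hq (show p.1 ⊓ q.1 ≠ ⊥ from fun h =>
      hU.1 (le_bot_iff.mp ((le_inf (le_sup_left : U ≤ p.1) (le_sup_left : U ≤ q.1)).trans h.le)))
    have r4 := reach_aux hq hdv (show q.1 ⊓ d.1 ≠ ⊥ by
      rw [inf_eq_right.mpr (le_sup_right : d.1 ≤ q.1)]; exact hd0)
    have r5 := reach_aux hdv hy (show d.1 ⊓ y.1 ≠ ⊥ by rw [hdy]; exact hd0)
    exact hsep (r1.trans (r2.trans (r3.trans (r4.trans r5))))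
  -- socle
  have hsocle : v.1 = moduleSocle R V := by
    apply le_antisymm
    · rw [← hsup]
      exact sup_le (le_sSup (isSimpleModule_iff_isAtom.mpr hcatom))
        (le_sSup (isSimpleModule_iff_isAtom.mpr hdatom))
    · exact sSup_le (fun W hW => hatomle W (isSimpleModule_iff_isAtom.mp hW))
  exact ⟨c.1, d.1, hcatom, hdatom, hcd, hsup, hcoatom, hsocle⟩

end Main
section Back

variable {R V : Type*} [Ring R] [AddCommGroup V] [Module R V]

lemma exists_cut (S T : Submodule R V) (hS : IsSimpleModule R S) (hT : IsSimpleModule R T)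
    (hST : S ⊓ T = ⊥) (hsup : S ⊔ T = moduleSocle R V) (hco : IsCoatom (moduleSocle R V)) :
    ∃ v : ProperSubmodule R V, (intersectionGraph R V).IsCutVertex v := by
  classical
  have hSat : IsAtom S := isSimpleModule_iff_isAtom.mp hS
  have hTat : IsAtom T := isSimpleModule_iff_isAtom.mp hT
  have hSlt : S < moduleSocle R V := by
    rw [← hsup]
    exact left_lt_sup.mpr (fun h => hTat.1 (le_bot_iff.mp ((le_inf h le_rfl).trans hST.le)))
  have hTlt : T < moduleSocle R V := by
    rw [← hsup]
    exact right_lt_sup.mpr (fun h => hSat.1 (le_bot_iff.mp ((le_inf le_rfl h).trans hST.le)))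
  set v : ProperSubmodule R V :=
    ⟨moduleSocle R V, fun h => hSat.1 (le_bot_iff.mp (hSlt.le.trans h.le)), hco.1⟩ with hvdef
  set va : ProperSubmodule R V := ⟨S, hSat.1, ne_top_of_lt hSlt⟩ with hvadef
  set vb : ProperSubmodule R V := ⟨T, hTat.1, ne_top_of_lt hTlt⟩ with hvbdef
  have ha : va ≠ v := fun h => hSlt.ne (congrArg Subtype.val h)
  have hb : vb ≠ v := fun h => hTlt.ne (congrArg Subtype.val h)
  have hreach : (intersectionGraph R V).Reachable va vb :=
    ((ig_adj ha (by rw [inf_eq_left.mpr hSlt.le]; exact hSat.1)).reachable).trans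
      (ig_adj hb.symm (by rw [inf_eq_right.mpr hTlt.le]; exact hTat.1)).reachable
  have hsoc_not_le : ∀ w : ProperSubmodule R V, w ≠ v → ¬ moduleSocle R V ≤ w.1 := by
    intro w hw hle
    rcases hle.lt_or_eq with h | h
    · exact w.2.2 (hco.2 _ h)
    · exact hw (Subtype.ext h.symm)
  have key : ∀ w : ProperSubmodule R V, w ≠ v → IsAtom (w.1 ⊓ moduleSocle R V) := by
    intro w hw
    have h0 : w.1 ⊓ moduleSocle R V ≠ ⊥ := by
      intro h0
      have hwle : ¬ w.1 ≤ moduleSocle R V := fun hh =>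
        w.2.1 (by rw [← inf_eq_left.mpr hh, h0])
      have htop : moduleSocle R V ⊔ w.1 = ⊤ :=
        hco.2 _ (lt_of_le_of_ne le_sup_left (fun hh => hwle (le_sup_right.trans hh.ge)))
      have hcompl : IsCompl (moduleSocle R V) w.1 :=
        ⟨disjoint_iff.mpr (by rw [inf_comm]; exact h0), codisjoint_iff.mpr htop⟩
      haveI : IsSimpleModule R (V ⧸ moduleSocle R V) := isSimpleModule_iff_isCoatom.mpr hco
      have hsimple : IsSimpleModule R w.1 :=
        IsSimpleModule.congr (Submodule.quotientEquivOfIsCompl _ _ hcompl).symm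
      exact hwle (le_sSup hsimple)
    have hne : w.1 ⊓ moduleSocle R V ≠ moduleSocle R V := fun h =>
      hsoc_not_le w hw (inf_eq_right.mp h)
    exact atom_of_le_sup_atoms hSat hTat (by rw [hsup]; exact inf_le_right)
      h0 (by rw [hsup]; exact hne)
  have hadj : ∀ p q : {u : ProperSubmodule R V // u ∈ {u | u ≠ v}},
      ((intersectionGraph R V).induce {u | u ≠ v}).Adj p q →
      p.1.1 ⊓ moduleSocle R V = q.1.1 ⊓ moduleSocle R V := by
    intro p q hpq
    have hpq' : (intersectionGraph R V).Adj p.1 q.1 := by simpa using hpq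
    have hm0 : p.1.1 ⊓ q.1.1 ≠ ⊥ := hpq'.2
    have hmt : p.1.1 ⊓ q.1.1 ≠ ⊤ := fun h =>
      p.1.2.2 (top_le_iff.mp (h.symm.trans_le inf_le_left))
    have hmv : (⟨p.1.1 ⊓ q.1.1, hm0, hmt⟩ : ProperSubmodule R V) ≠ v := fun h =>
      hsoc_not_le p.1 p.2 (le_trans (congrArg Subtype.val h).ge inf_le_left)
    have hmatom := key ⟨p.1.1 ⊓ q.1.1, hm0, hmt⟩ hmv
    have hpatom := key p.1 p.2
    have hqatom := key q.1 q.2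
    have h1 : (p.1.1 ⊓ q.1.1) ⊓ moduleSocle R V ≤ p.1.1 ⊓ moduleSocle R V :=
      inf_le_inf_right _ inf_le_left
    have h2 : (p.1.1 ⊓ q.1.1) ⊓ moduleSocle R V ≤ q.1.1 ⊓ moduleSocle R V :=
      inf_le_inf_right _ inf_le_right
    rw [← (hpatom.le_iff.mp h1).resolve_left hmatom.1,
        ← (hqatom.le_iff.mp h2).resolve_left hmatom.1]
  have hnr : ¬ ((intersectionGraph R V).induce {u | u ≠ v}).Reachable ⟨va, ha⟩ ⟨vb, hb⟩ := by
    intro hr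
    have hconst := eq_of_reachable (fun u => u.1.1 ⊓ moduleSocle R V) hadj hr
    simp only at hconst
    rw [inf_eq_left.mpr hSlt.le, inf_eq_left.mpr hTlt.le] at hconst
    exact hSat.1 (by rw [← hST, ← hconst, inf_idem])
  exact ⟨v, va, vb, ha, hb, hreach, hnr⟩

end Back

theorem stmt5 (R V : Type*) [Ring R] [AddCommGroup V] [Module R V] :
    ((∃ v : ProperSubmodule R V, (intersectionGraph R V).IsCutVertex v) ↔
      ((∃ S T : Submodule R V, IsSimpleModule R S ∧ IsSimpleModule R T ∧
          S ⊓ T = ⊥ ∧ S ⊔ T = moduleSocle R V) ∧ IsCoatom (moduleSocle R V))) ∧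
    (∀ v : ProperSubmodule R V, (intersectionGraph R V).IsCutVertex v →
        v.1 = moduleSocle R V) := by
  constructor
  · constructor
    · rintro ⟨v, hv⟩
      obtain ⟨c, d, hc, hd, hcd, hsup, hco, hsoc⟩ := cut_structure v hv
      exact ⟨⟨c, d, isSimpleModule_iff_isAtom.mpr hc, isSimpleModule_iff_isAtom.mpr hd,
        hcd, hsup.trans hsoc⟩, hsoc ▸ hco⟩
    · rintro ⟨⟨S, T, hS, hT, hST, hsup⟩, hco⟩
      exact exists_cut S T hS hT hST hsup hco
  · intro v hv
    obtain ⟨_, _, _, _, _, _, _, hsoc⟩ := cut_structure v hv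
    exact hsoc
end

section
/- For a natural number m ≥ 3, if the intersection graph G(V) contains no m-cycle, then V has a composition series of length at most m. -/
namespace CliqueCycleAux

variable {α : Type*} (G : SimpleGraph α) (g : ℕ → α)

/-- Walk down a clique: `g k → g (k-1) → ... → g 0`. -/
def cliqueWalk : (k : ℕ) → (∀ i < k, G.Adj (g (i+1)) (g i)) → G.Walk (g k) (g 0)
  | 0, _ => SimpleGraph.Walk.nil
  | (k+1), hadj => SimpleGraph.Walk.cons (hadj k (Nat.lt_succ_self k))
      (cliqueWalk k (fun i hi => hadj i (Nat.lt_succ_of_lt hi)))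

lemma cliqueWalk_length : ∀ (k : ℕ) (h : ∀ i < k, G.Adj (g (i+1)) (g i)),
    (cliqueWalk G g k h).length = k
  | 0, _ => rfl
  | (k+1), h => by
      simp [cliqueWalk, cliqueWalk_length k]

lemma cliqueWalk_support : ∀ (k : ℕ) (h : ∀ i < k, G.Adj (g (i+1)) (g i)),
    (cliqueWalk G g k h).support = ((List.range (k+1)).reverse.map g)
  | 0, _ => rfl
  | (k+1), h => by
      rw [cliqueWalk, SimpleGraph.Walk.support_cons, cliqueWalk_support k]
      simp [List.range_succ]

lemma cliqueWalk_edges : ∀ (k : ℕ) (h : ∀ i < k, G.Adj (g (i+1)) (g i)),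
    (cliqueWalk G g k h).edges = (List.range k).reverse.map (fun i => s(g (i+1), g i))
  | 0, _ => rfl
  | (k+1), h => by
      rw [cliqueWalk, SimpleGraph.Walk.edges_cons, cliqueWalk_edges k,
        List.range_succ]
      simp

lemma exists_cycle_of_clique {n : ℕ} (hn : 3 ≤ n)
    (hadj : ∀ i j, i < n → j < n → i ≠ j → G.Adj (g i) (g j)) :
    ∃ c : G.Walk (g 0) (g 0), c.IsCycle ∧ c.length = n := by
  have hinj : ∀ i j, i < n → j < n → g i = g j → i = j := by
    intro i j hi hj hgij
    by_contra hne
    exact (hadj i j hi hj hne).ne hgij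
  have hstep : ∀ i < n - 1, G.Adj (g (i+1)) (g i) :=
    fun i hi => hadj _ _ (by omega) (by omega) (by omega)
  set w := cliqueWalk G g (n-1) hstep with hw
  have hpath : w.IsPath := by
    rw [SimpleGraph.Walk.isPath_def, hw, cliqueWalk_support]
    refine List.Nodup.map_on ?_ (List.nodup_reverse.mpr List.nodup_range)
    intro x hx y hy hxy
    simp only [List.mem_reverse, List.mem_range] at hx hy
    exact hinj x y (by omega) (by omega) hxy
  have hne0 : G.Adj (g 0) (g (n-1)) := hadj 0 (n-1) (by omega) (by omega) (by omega)
  refine ⟨SimpleGraph.Walk.cons hne0 w, ?_, ?_⟩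
  · apply SimpleGraph.Path.cons_isCycle ⟨w, hpath⟩ hne0
    show s(g 0, g (n-1)) ∉ w.edges
    rw [hw, cliqueWalk_edges]
    intro hmem
    simp only [List.mem_map, List.mem_reverse, List.mem_range] at hmem
    obtain ⟨i, hi, hq⟩ := hmem
    rw [Sym2.eq_iff] at hq
    rcases hq with ⟨h1, h2⟩ | ⟨h1, h2⟩
    · have := hinj _ _ (by omega) (by omega) h1.symm
      omega
    · have e1 := hinj _ _ (by omega) (by omega) h1.symm
      have e2 := hinj _ _ (by omega) (by omega) h2.symm
      omega
  · rw [SimpleGraph.Walk.length_cons, hw, cliqueWalk_length]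
    omega

end CliqueCycleAux

theorem stmt7 (R V : Type*) [Ring R] [AddCommGroup V] [Module R V]
    (m : ℕ) (hm : 3 ≤ m)
    (h : ∀ (v : ProperSubmodule R V) (c : (intersectionGraph R V).Walk v v),
        ¬ (c.IsCycle ∧ c.length = m)) :
    ∃ n ≤ m, HasCompositionSeriesOfLength R V n := by
  classical
  -- Step 1: any strict chain of submodules from ⊥ to ⊤ has length ≤ m.
  have key : ∀ s : LTSeries (Submodule R V), s.head = ⊥ → s.last = ⊤ → s.length ≤ m := by
    intro s hh hl
    by_contra hlen
    push_neg at hlen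
    have hidx : ∀ i : ℕ, min (i+1) m < s.length + 1 := by omega
    have hprop : ∀ i : ℕ, s ⟨min (i+1) m, hidx i⟩ ≠ ⊥ ∧ s ⟨min (i+1) m, hidx i⟩ ≠ ⊤ := by
      intro i
      constructor
      · intro hb
        have h0 : s 0 < s ⟨min (i+1) m, hidx i⟩ := by
          apply s.strictMono
          rw [Fin.lt_def]
          simp
          omega
        rw [show s 0 = s.head from rfl, hh, hb] at h0
        exact lt_irrefl _ h0
      · intro ht
        have h1 : s ⟨min (i+1) m, hidx i⟩ < s (Fin.last _) := by
          apply s.strictMono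
          rw [Fin.lt_def]
          simp [Fin.last]
          omega
        rw [show s (Fin.last _) = s.last from rfl, hl, ht] at h1
        exact lt_irrefl _ h1
    set g : ℕ → ProperSubmodule R V := fun i => ⟨s ⟨min (i+1) m, hidx i⟩, hprop i⟩ with hg
    have hltg : ∀ a b : ℕ, a < b → b < m → (g a).1 < (g b).1 := by
      intro a b hab hbm
      apply s.strictMono
      rw [Fin.lt_def]
      simp
      omega
    have hadj : ∀ i j, i < m → j < m → i ≠ j →
        (intersectionGraph R V).Adj (g i) (g j) := by
      intro i j hi hj hij
      constructor
      · intro he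
        rcases Nat.lt_or_ge i j with hlt' | hge
        · exact absurd (congrArg Subtype.val he) (ne_of_lt (hltg i j hlt' hj))
        · exact absurd (congrArg Subtype.val he) (ne_of_gt (hltg j i (by omega) hi))
      · rcases Nat.lt_or_ge i j with hlt' | hge
        · rw [inf_of_le_left (le_of_lt (hltg i j hlt' hj))]
          exact (hprop i).1
        · rcases Nat.lt_or_ge j i with hlt'' | hge'
          · rw [inf_of_le_right (le_of_lt (hltg j i hlt'' hi))]
            exact (hprop j).1
          · omega
    obtain ⟨c, hc1, hc2⟩ := CliqueCycleAux.exists_cycle_of_clique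
      (intersectionGraph R V) g hm hadj
    exact h (g 0) c ⟨hc1, hc2⟩
  -- Step 2: pick a strict chain from ⊥ to ⊤ of maximal length.
  set P : ℕ → Prop := fun n =>
    ∃ s : LTSeries (Submodule R V), s.head = ⊥ ∧ s.last = ⊤ ∧ s.length = n with hP
  have hPle : ∀ n, P n → n ≤ m := by
    rintro n ⟨s, h1, h2, h3⟩
    exact h3 ▸ key s h1 h2
  have hPex : ∃ k, P k := by
    by_cases hbt : (⊥ : Submodule R V) = ⊤
    · exact ⟨0, RelSeries.singleton _ ⊥, rfl, hbt, rfl⟩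
    · refine ⟨1, ⟨1, ![⊥, ⊤], ?_⟩, ?_, ?_, rfl⟩
      · intro i
        fin_cases i
        simpa using lt_of_le_of_ne bot_le hbt
      · rfl
      · rfl
  obtain ⟨k0, hk0⟩ := hPex
  have hspec : P (Nat.findGreatest P m) := Nat.findGreatest_spec (hPle k0 hk0) hk0
  obtain ⟨s, hh, hl, hlen⟩ := hspec
  have hmax : ∀ k, P k → k ≤ s.length := by
    intro k hk
    rw [hlen]
    exact Nat.le_findGreatest (hPle k hk) hk
  refine ⟨s.length, key s hh hl, ⟨⟨s.length, s.toFun, ?_⟩, hh, hl, rfl⟩⟩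
  intro i
  refine ⟨s.step i, fun x hx1 hx2 => ?_⟩
  set s' : LTSeries (Submodule R V) := s.insertNth i x hx1 hx2 with hs'
  have happ : ∀ j : Fin (s.length + 1),
      s' ((Fin.castSucc i.succ).succAbove j) = s j := by
    intro j
    exact Fin.insertNth_apply_succAbove (α := fun _ => Submodule R V) (Fin.castSucc i.succ) x s.toFun j
  have hs'h : s'.head = ⊥ := by
    refine le_antisymm ?_ bot_le
    rw [← hh]
    show s'.toFun 0 ≤ s.toFun 0
    rw [← happ 0]
    exact s'.strictMono.monotone (Fin.zero_le _)
  have hs'l : s'.last = ⊤ := by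
    refine le_antisymm le_top ?_
    rw [← hl]
    show s.toFun (Fin.last _) ≤ s'.toFun (Fin.last _)
    rw [← happ (Fin.last _)]
    exact s'.strictMono.monotone (Fin.le_last _)
  have hP' : P (s.length + 1) := ⟨s', hs'h, hs'l, by simp [hs', RelSeries.insertNth]⟩
  have := hmax _ hP'
  omega
end

section
/- Let U be a nonzero R-submodule of V which is not simple, and let W be a maximal element (with respect to inclusion) of the set of submodules X of V with X ∩ U = 0. If A is a dominating set for G(U), then {T + W : T ∈ A} is a dominating set for G(V). -/
/-- A dominating set for the intersection graph: every vertex outside `D` is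
adjacent to some vertex of `D`. -/
def IsDominatingSet (R V : Type*) [Ring R] [AddCommGroup V] [Module R V]
    (D : Set (ProperSubmodule R V)) : Prop :=
  ∀ v ∉ D, ∃ w ∈ D, (intersectionGraph R V).Adj v w

theorem stmt10 (R V : Type*) [Ring R] [AddCommGroup V] [Module R V]
    (U : Submodule R V) (hU : U ≠ ⊥) (hUns : ¬ IsSimpleModule R U)
    (W : Submodule R V) (hWU : W ⊓ U = ⊥)
    (hWmax : ∀ X : Submodule R V, X ⊓ U = ⊥ → W ≤ X → X = W)
    (A : Set (ProperSubmodule R U)) (hA : IsDominatingSet R U A) :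
    IsDominatingSet R V
      {v : ProperSubmodule R V | ∃ T ∈ A, v.1 = Submodule.map U.subtype T.1 ⊔ W} := by

  have hmapinj := Submodule.map_injective_of_injective (f := U.subtype) U.injective_subtype
  -- A is nonempty
  have hAne : ∃ T, T ∈ A := by
    have hnt : Nontrivial ↥U := Submodule.nontrivial_iff_ne_bot.mpr hU
    have hex : ∃ P : Submodule R ↥U, P ≠ ⊥ ∧ P ≠ ⊤ := by
      by_contra h
      push_neg at h
      exact hUns ((isSimpleModule_iff _ _).mpr ⟨fun a => or_iff_not_imp_left.mpr (h a)⟩)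
    obtain ⟨P, hP1, hP2⟩ := hex
    by_cases hp : (⟨P, hP1, hP2⟩ : ProperSubmodule R ↥U) ∈ A
    · exact ⟨_, hp⟩
    · obtain ⟨T, hT, _⟩ := hA _ hp
      exact ⟨T, hT⟩
  -- T + W is proper for every T ∈ A
  have hmle : ∀ T : ProperSubmodule R ↥U, Submodule.map U.subtype T.1 ≤ U := by
    rintro T x ⟨y, hy, rfl⟩; exact y.2
  have hproper : ∀ T : ProperSubmodule R ↥U,
      Submodule.map U.subtype T.1 ⊔ W ≠ ⊥ ∧ Submodule.map U.subtype T.1 ⊔ W ≠ ⊤ := by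
    intro T
    constructor
    · intro h
      have h1 : Submodule.map U.subtype T.1 = ⊥ :=
        le_bot_iff.mp (h ▸ le_sup_left)
      exact T.2.1 (hmapinj (by rw [h1, Submodule.map_bot]))
    · intro h
      have h2 : (Submodule.map U.subtype T.1 ⊔ W) ⊓ U
          = Submodule.map U.subtype T.1 ⊔ (W ⊓ U) := sup_inf_assoc_of_le W (hmle T)
      rw [h, hWU, top_inf_eq, sup_bot_eq] at h2
      exact T.2.2 (hmapinj (by rw [Submodule.map_subtype_top]; exact h2.symm))
  intro v hv
  have key : ∃ T ∈ A, v.1 ⊓ (Submodule.map U.subtype T.1 ⊔ W) ≠ ⊥ := by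
    by_cases hXW : v.1 ⊓ W = ⊥
    · -- case v ∩ W = 0
      set Y : Submodule R ↥U := Submodule.comap U.subtype (v.1 ⊔ W) with hYdef
      have hYb : Y ≠ ⊥ := by
        intro h
        have hmap : Submodule.map U.subtype Y = U ⊓ (v.1 ⊔ W) :=
          Submodule.map_comap_subtype U (v.1 ⊔ W)
        rw [h, Submodule.map_bot] at hmap
        have h0 : (v.1 ⊔ W) ⊓ U = ⊥ := by rw [inf_comm]; exact hmap.symm
        have hW' := hWmax _ h0 le_sup_right
        have hXle : v.1 ≤ W := le_sup_left.trans hW'.le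
        exact v.2.1 (le_bot_iff.mp ((le_inf le_rfl hXle).trans hXW.le))
      obtain ⟨T, hT, hTY⟩ : ∃ T ∈ A, T.1 ⊓ Y ≠ ⊥ := by
        by_cases hYt : Y = ⊤
        · obtain ⟨T, hT⟩ := hAne
          exact ⟨T, hT, by rw [hYt, inf_top_eq]; exact T.2.1⟩
        · by_cases hymem : (⟨Y, hYb, hYt⟩ : ProperSubmodule R ↥U) ∈ A
          · exact ⟨_, hymem, by show Y ⊓ Y ≠ ⊥; rw [inf_idem]; exact hYb⟩
          · obtain ⟨T, hT, hadj⟩ := hA _ hymem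
            exact ⟨T, hT, by rw [inf_comm]; exact hadj.2⟩
      refine ⟨T, hT, ?_⟩
      obtain ⟨u, hu, hu0⟩ := Submodule.exists_mem_ne_zero_of_ne_bot hTY
      obtain ⟨x, hx, w, hw, hxw⟩ := Submodule.mem_sup.mp hu.2
      have hx0 : x ≠ 0 := by
        intro h0
        rw [h0, zero_add] at hxw
        have hWUmem : U.subtype u ∈ W ⊓ U := ⟨hxw ▸ hw, u.2⟩
        rw [hWU, Submodule.mem_bot] at hWUmem
        exact hu0 (by simpa using hWUmem)
      have hxmem : x ∈ Submodule.map U.subtype T.1 ⊔ W := by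
        have hxeq : x = U.subtype u + (-w) := by rw [← hxw]; abel
        rw [hxeq]
        exact Submodule.add_mem _ (Submodule.mem_sup_left ⟨u, hu.1, rfl⟩)
          (Submodule.mem_sup_right (neg_mem hw))
      intro hbot
      have : x ∈ (⊥ : Submodule R V) := hbot ▸ Submodule.mem_inf.mpr ⟨hx, hxmem⟩
      exact hx0 (Submodule.mem_bot R |>.mp this)
    · -- case v ∩ W ≠ 0
      obtain ⟨T, hT⟩ := hAne
      refine ⟨T, hT, fun h => hXW ?_⟩
      exact eq_bot_mono (inf_le_inf_left _ le_sup_right) h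
  obtain ⟨T, hT, hint⟩ := key
  refine ⟨⟨Submodule.map U.subtype T.1 ⊔ W, hproper T⟩, ⟨T, hT, rfl⟩, ?_, hint⟩
  intro h
  exact hv ⟨T, hT, congrArg Subtype.val h⟩
end

section
/- Let S be a simple R-module, n a natural number, and S_n the direct sum of n copies of S. Then the number of maximal R-submodules of S_n is (d^n − 1)/(d − 1), where d = |End_R(S)| (interpreted appropriately; in particular for n ≥ 2 this number is finite iff d is finite). -/
set_option linter.unusedSectionVars false

open LinearMap Cardinal

namespace Stmt14Aux

/-- A sigma type over an option type splits as a sum. -/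
def sigmaOption {α : Type*} (g : Option α → Type*) :
    (Σ o : Option α, g o) ≃ g none ⊕ Σ a : α, g (some a) where
  toFun x := match x with
    | ⟨none, y⟩ => .inl y
    | ⟨some a, y⟩ => .inr ⟨a, y⟩
  invFun x := match x with
    | .inl y => ⟨none, y⟩
    | .inr ⟨a, y⟩ => ⟨some a, y⟩
  left_inv := by rintro ⟨(_ | a), y⟩ <;> rfl
  right_inv := by rintro (y | ⟨a, y⟩) <;> rfl

theorem sum_eq_of_fintype {α : Type u} [h : Fintype α] (f : α → Cardinal.{v}) :
    Cardinal.sum f = Cardinal.lift.{u} (∑ i, f i) := by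
  revert f
  refine Fintype.induction_empty_option ?_ ?_ ?_ α (h_fintype := h)
  · intro α β _ e h f
    letI := Fintype.ofEquiv β e.symm
    rw [← e.sum_comp f, ← h]
    exact Cardinal.mk_sigma_congr e.symm fun b => by
      rw [Cardinal.mk_out, Cardinal.mk_out]; simp
  · intro f
    simp [Cardinal.sum]
  · intro α _ ih f
    rw [Cardinal.sum, Cardinal.mk_congr (sigmaOption fun o => Quotient.out (f o)),
      Cardinal.mk_sum, Cardinal.mk_out, ← Cardinal.sum, ih fun a => f (some a),
      Fintype.sum_option, Cardinal.lift_add]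
    rw [Cardinal.lift_umax.{v,u}, Cardinal.lift_id'.{v,u}]

section Comb

variable {D : Type*} [DivisionRing D] {n : ℕ}

/-- Normalized representatives: a pivot index plus free coordinates above it. -/
abbrev T (D : Type*) (n : ℕ) : Type _ := Σ i : Fin n, ({j : Fin n // i < j} → D)

/-- The vector associated to a normalized representative: `1` at the pivot,
`0` below it, free above it. -/
def toVec (t : T D n) : Fin n → D := fun j =>
  if h : t.1 < j then t.2 ⟨j, h⟩ else if j = t.1 then 1 else 0

lemma toVec_self (i : Fin n) (u : {j : Fin n // i < j} → D) :
    toVec ⟨i, u⟩ i = 1 := by simp [toVec]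

lemma toVec_of_lt (i : Fin n) (u : {j : Fin n // i < j} → D) {j : Fin n} (h : j < i) :
    toVec ⟨i, u⟩ j = 0 := by
  simp [toVec, not_lt_of_gt h, ne_of_lt h]

lemma toVec_of_gt (i : Fin n) (u : {j : Fin n // i < j} → D) {j : Fin n} (h : i < j) :
    toVec ⟨i, u⟩ j = u ⟨j, h⟩ := by simp [toVec, h]

lemma toVec_ne_zero (t : T D n) : toVec t ≠ 0 := by
  obtain ⟨i, u⟩ := t
  intro h
  have h1 : toVec (⟨i, u⟩ : T D n) i = 0 := by rw [h]; rfl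
  rw [toVec_self] at h1
  exact one_ne_zero h1

/-- If two normalized vectors are proportional, the representatives agree. -/
lemma toVec_eq_of_smul {t t' : T D n} {c : D} (hc : c ≠ 0)
    (h : toVec t' = fun j => c * toVec t j) : t = t' := by
  obtain ⟨i, u⟩ := t
  obtain ⟨i', u'⟩ := t'
  have hii : i = i' := by
    rcases lt_trichotomy i i' with hlt | heq | hgt
    · exfalso
      have h1 : toVec (⟨i', u'⟩ : T D n) i = c * toVec (⟨i, u⟩ : T D n) i := congrFun h i
      rw [toVec_of_lt i' u' hlt, toVec_self, mul_one] at h1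
      exact hc h1.symm
    · exact heq
    · exfalso
      have h1 : toVec (⟨i', u'⟩ : T D n) i' = c * toVec (⟨i, u⟩ : T D n) i' := congrFun h i'
      rw [toVec_self, toVec_of_lt i u hgt, mul_zero] at h1
      exact one_ne_zero h1
  subst hii
  have hc1 : c = 1 := by
    have h1 : toVec (⟨i, u'⟩ : T D n) i = c * toVec (⟨i, u⟩ : T D n) i := congrFun h i
    rw [toVec_self, toVec_self, mul_one] at h1
    exact h1.symm
  subst hc1
  have hu : u = u' := by
    funext j
    have h1 : toVec (⟨i, u'⟩ : T D n) j = 1 * toVec (⟨i, u⟩ : T D n) j := congrFun h j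
    rw [toVec_of_gt i u' j.2, toVec_of_gt i u j.2, one_mul] at h1
    exact h1.symm
  rw [hu]

/-- Every nonzero vector is proportional to a normalized one. -/
lemma exists_smul_toVec (v : Fin n → D) (hv : v ≠ 0) :
    ∃ (t : T D n) (c : D), c ≠ 0 ∧ toVec t = fun j => c * v j := by
  classical
  obtain ⟨i₀, hi₀⟩ : ∃ i, v i ≠ 0 := Function.ne_iff.mp hv
  let s : Finset (Fin n) := Finset.univ.filter fun i => v i ≠ 0
  have hs : s.Nonempty := ⟨i₀, by simp [s, hi₀]⟩
  have hvi : v (s.min' hs) ≠ 0 := by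
    have := s.min'_mem hs
    simpa [s] using this
  have hmin : ∀ j, j < s.min' hs → v j = 0 := fun j hj => by
    by_contra hj0
    exact absurd (s.min'_le j (by simp [s, hj0])) (not_le_of_gt hj)
  refine ⟨⟨s.min' hs, fun j => (v (s.min' hs))⁻¹ * v j⟩, (v (s.min' hs))⁻¹,
    inv_ne_zero hvi, ?_⟩
  funext j
  rcases lt_trichotomy (s.min' hs) j with hlt | heq | hgt
  · rw [toVec_of_gt _ _ hlt]
  · rw [← heq, toVec_self, inv_mul_cancel₀ hvi]
  · rw [toVec_of_lt _ _ hgt, hmin j hgt, mul_zero]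

theorem card_T : Cardinal.mk (T D n) = ∑ k ∈ Finset.range n, Cardinal.mk D ^ k := by
  rw [Cardinal.mk_sigma, sum_eq_of_fintype, Cardinal.lift_uzero]
  have key : ∀ i : Fin n, Cardinal.mk ({j : Fin n // i < j} → D)
      = Cardinal.mk D ^ (n - 1 - (i : ℕ)) := by
    intro i
    have hcard : Fintype.card {j : Fin n // i < j} = n - 1 - (i : ℕ) := by
      rw [Fintype.card_congr (Equiv.subtypeEquivRight (q := fun j => j ∈ Finset.Ioi i)
        fun j => by simp), Fintype.card_coe, Fin.card_Ioi]
    rw [Cardinal.mk_arrow, Cardinal.mk_fintype {j : Fin n // i < j}, hcard,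
      Cardinal.lift_natCast, Cardinal.lift_uzero, Cardinal.power_natCast]
  simp_rw [key]
  rw [Fin.sum_univ_eq_sum_range (fun k => Cardinal.mk D ^ (n - 1 - k)) n]
  exact Finset.sum_range_reflect (fun k => Cardinal.mk D ^ k) n

end Comb

section Mod

variable {R S : Type*} [Ring R] [AddCommGroup S] [Module R S] [IsSimpleModule R S] {n : ℕ}

noncomputable instance : DivisionRing (Module.End R S) :=
  letI := Classical.decEq (Module.End R S); Module.End.instDivisionRing

/-- The linear equivalence between tuples of endomorphisms and maps `Sⁿ → S`. -/
noncomputable def Φ : (Fin n → Module.End R S) ≃ₗ[ℕ] ((Fin n → S) →ₗ[R] S) :=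
  LinearMap.lsum R (fun _ : Fin n => S) ℕ

lemma Φ_eq_zero_iff (v : Fin n → Module.End R S) : Φ v = 0 ↔ v = 0 := Φ.map_eq_zero_iff

lemma Φ_apply (v : Fin n → Module.End R S) (x : Fin n → S) : Φ v x = ∑ i, v i (x i) := by
  simp [Φ, LinearMap.lsum_apply]

lemma Φ_smul (c : Module.End R S) (v : Fin n → Module.End R S) :
    Φ (fun i => c * v i) = c ∘ₗ Φ v := by
  ext x; simp [Φ_apply, map_sum]

lemma surj_Φ {v : Fin n → Module.End R S} (hv : v ≠ 0) : Function.Surjective (Φ v) :=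
  LinearMap.surjective_of_ne_zero (by rwa [Ne, Φ_eq_zero_iff])

lemma coatom_ker {v : Fin n → Module.End R S} (hv : v ≠ 0) : IsCoatom (ker (Φ v)) :=
  LinearMap.isCoatom_ker_of_surjective (surj_Φ hv)

instance : IsSemisimpleModule R (Fin n → S) := by
  refine isSemisimpleModule_of_isSemisimpleModule_submodule'
    (p := fun i : Fin n => LinearMap.range (LinearMap.single R (fun _ : Fin n => S) i))
    (fun i => ?_) (LinearMap.iSup_range_single R _)
  exact IsSemisimpleModule.congr (LinearEquiv.ofInjective _
    (LinearMap.ker_eq_bot.mp (LinearMap.ker_single R (fun _ : Fin n => S) i))).symm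

lemma exists_ker_eq (M : Submodule R (Fin n → S)) (hM : IsCoatom M) :
    ∃ v : Fin n → Module.End R S, v ≠ 0 ∧ ker (Φ v) = M := by
  obtain ⟨N, hN⟩ := exists_isCompl M
  have hsimp : IsSimpleModule R ((Fin n → S) ⧸ M) := isSimpleModule_iff_isCoatom.mpr hM
  let e₁ : ((Fin n → S) ⧸ M) ≃ₗ[R] N := Submodule.quotientEquivOfIsCompl M N hN
  have hNsimp : IsSimpleModule R N := IsSimpleModule.congr e₁.symm
  haveI := IsSimpleModule.nontrivial R N
  obtain ⟨⟨x, hxN⟩, hx0⟩ := exists_ne (0 : N)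
  have hx : x ≠ 0 := by simpa [Subtype.ext_iff] using hx0
  obtain ⟨i, hi⟩ : ∃ i, x i ≠ 0 := Function.ne_iff.mp hx
  let g : N →ₗ[R] S := (LinearMap.proj i).comp N.subtype
  have hg : g ≠ 0 := fun h => hi (by simpa [g] using LinearMap.congr_fun h ⟨x, hxN⟩)
  let e₂ : N ≃ₗ[R] S := LinearEquiv.ofBijective g (LinearMap.bijective_of_ne_zero hg)
  have hinj : ker (e₂.toLinearMap ∘ₗ e₁.toLinearMap) = ⊥ :=
    LinearMap.ker_eq_bot.mpr (e₂.toEquiv.injective.comp e₁.toEquiv.injective)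
  refine ⟨Φ.symm ((e₂.toLinearMap ∘ₗ e₁.toLinearMap) ∘ₗ M.mkQ), ?_, ?_⟩
  · intro h
    have h0 : (e₂.toLinearMap ∘ₗ e₁.toLinearMap) ∘ₗ M.mkQ = 0 :=
      Φ.symm.map_eq_zero_iff.mp h
    have : M = ⊤ := by
      have := congrArg LinearMap.ker h0
      rwa [LinearMap.ker_comp_of_ker_eq_bot _ hinj, Submodule.ker_mkQ,
        LinearMap.ker_zero] at this
    exact hM.1 this
  · rw [LinearEquiv.apply_symm_apply, LinearMap.ker_comp_of_ker_eq_bot _ hinj,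
      Submodule.ker_mkQ]

lemma scale_of_ker_eq {v w : Fin n → Module.End R S} (hv : v ≠ 0) (hw : w ≠ 0)
    (h : ker (Φ v) = ker (Φ w)) : ∃ c : Module.End R S, c ≠ 0 ∧ w = fun i => c * v i := by
  have hf : Function.Surjective (Φ v) := surj_Φ hv
  let e := (Φ v).quotKerEquivOfSurjective hf
  have he : ∀ x, e (Submodule.Quotient.mk x) = Φ v x := fun x => rfl
  let c : Module.End R S := (Submodule.liftQ (ker (Φ v)) (Φ w) h.le) ∘ₗ e.symm.toLinearMap
  have hc : c ∘ₗ Φ v = Φ w := by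
    refine LinearMap.ext fun x => ?_
    have : e.symm (Φ v x) = Submodule.Quotient.mk x := by
      rw [LinearEquiv.symm_apply_eq, he]
    simp only [LinearMap.comp_apply, c, LinearEquiv.coe_coe, this, Submodule.liftQ_apply]
  refine ⟨c, fun hc0 => hw ((Φ_eq_zero_iff w).mp ?_), ?_⟩
  · rw [← hc, hc0]; exact LinearMap.zero_comp _
  · apply Φ.injective
    rw [Φ_smul, hc]

lemma ker_smul {v : Fin n → Module.End R S} (c : Module.End R S) (hc : c ≠ 0) :
    ker (Φ (fun i => c * v i)) = ker (Φ v) := by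
  rw [Φ_smul, LinearMap.ker_comp_of_ker_eq_bot]
  exact LinearMap.ker_eq_bot_of_injective (LinearMap.injective_of_ne_zero hc)

/-- The bijection from normalized representatives to maximal submodules. -/
noncomputable def F : T (Module.End R S) n → {M : Submodule R (Fin n → S) // IsCoatom M} :=
  fun t => ⟨ker (Φ (toVec t)), coatom_ker (toVec_ne_zero t)⟩

lemma F_bijective : Function.Bijective (F (R := R) (S := S) (n := n)) := by
  constructor
  · intro t t' h
    have hker : ker (Φ (toVec t)) = ker (Φ (toVec t')) := congrArg Subtype.val h
    obtain ⟨c, hc, hw⟩ := scale_of_ker_eq (toVec_ne_zero t) (toVec_ne_zero t') hker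
    exact toVec_eq_of_smul hc hw
  · rintro ⟨M, hM⟩
    obtain ⟨v, hv, hker⟩ := exists_ker_eq M hM
    obtain ⟨t, c, hc, ht⟩ := exists_smul_toVec v hv
    refine ⟨t, Subtype.ext ?_⟩
    show ker (Φ (toVec t)) = M
    rw [ht, ker_smul c hc, hker]

end Mod

end Stmt14Aux

/-- The number of maximal submodules of `Sⁿ` is `(dⁿ-1)/(d-1) = 1 + d + ⋯ + dⁿ⁻¹`
where `d = |End_R(S)|` (stated as a cardinal identity, which interprets the
formula appropriately also for infinite `d`); in particular for `n ≥ 2` it is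
finite iff `d` is finite. -/
theorem stmt14 (R S : Type*) [Ring R] [AddCommGroup S] [Module R S]
    [IsSimpleModule R S] (n : ℕ) :
    Cardinal.mk {M : Submodule R (Fin n → S) // IsCoatom M} =
        ∑ k ∈ Finset.range n, Cardinal.mk (Module.End R S) ^ k ∧
      (2 ≤ n →
        (Finite {M : Submodule R (Fin n → S) // IsCoatom M} ↔
          Finite (Module.End R S))) := by
  have e : Stmt14Aux.T (Module.End R S) n ≃ {M : Submodule R (Fin n → S) // IsCoatom M} :=
    Equiv.ofBijective _ (Stmt14Aux.F_bijective (R := R) (S := S) (n := n))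
  constructor
  · exact (Cardinal.mk_congr e).symm.trans Stmt14Aux.card_T
  · intro hn
    have h0 : 0 < n := by omega
    have h1n : 1 < n := by omega
    constructor
    · intro hfin
      haveI hT : Finite (Stmt14Aux.T (Module.End R S) n) := Finite.of_equiv _ e.symm
      have hij : (⟨0, h0⟩ : Fin n) < ⟨1, h1n⟩ := by simp [Fin.lt_def]
      haveI h1 : Finite ({j : Fin n // (⟨0, h0⟩ : Fin n) < j} → Module.End R S) :=
        Finite.of_injective _
          (@sigma_mk_injective (Fin n)
            (fun i => {j : Fin n // i < j} → Module.End R S) ⟨0, h0⟩)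
      exact Finite.of_injective
        (fun d => (fun _ => d : {j : Fin n // (⟨0, h0⟩ : Fin n) < j} → Module.End R S))
        fun a b hab => congrFun hab ⟨⟨1, h1n⟩, hij⟩
    · intro hD
      exact Finite.of_equiv _ e
end

section
/- Let V be a semisimple R-module of even composition length 2k such that some simple R-module has odd multiplicity as a composition factor of V. Then for any three R-submodules W_1, W_2, W_3 of V each of composition length k, at least one of the intersections W_1 ∩ W_2, W_1 ∩ W_3, W_2 ∩ W_3 is nonzero. -/
universe u v

open Submodule

/-- A module has composition length `i` if it has a composition series of length `i`. -/
def hasLength (R M : Type*) [Ring R] [AddCommGroup M] [Module R M] (i : ℕ) : Prop :=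
  ∃ s : RelSeries {p : Submodule R M × Submodule R M | p.1 ⋖ p.2},
    s.head = ⊥ ∧ s.last = ⊤ ∧ s.length = i

section aux

/-- A series of covers in a lattice. -/
abbrev CovSeries (α : Type*) [Lattice α] := RelSeries {p : α × α | p.1 ⋖ p.2}

/-- Length between two lattice elements witnessed by a cover series. -/
def clen {α : Type*} [Lattice α] (A B : α) (i : ℕ) : Prop :=
  ∃ s : CovSeries α, s.head = A ∧ s.last = B ∧ s.length = i

variable {α : Type*} [Lattice α]

lemma covSeries_strictMono (s : CovSeries α) : StrictMono s.toFun :=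
  Fin.strictMono_iff_lt_succ.2 fun i => CovBy.lt (s.step i)

lemma clen_zero {A B : α} (h : clen A B 0) : A = B := by
  obtain ⟨s, h1, h2, h3⟩ := h
  rw [← h1, ← h2]
  unfold RelSeries.head RelSeries.last
  congr 1
  ext
  simp [h3]

/-- map a cover series through a cover-preserving map -/
def CovSeries.map' {β : Type*} [Lattice β] (s : CovSeries α) (f : α → β)
    (hf : ∀ ⦃a b⦄, a ⋖ b → f a ⋖ f b) : CovSeries β :=
  ⟨s.length, f ∘ s.toFun, fun i => hf (s.step i)⟩

lemma clen_map {β : Type*} [Lattice β] (f : α ↪o β) (h : (Set.range f).OrdConnected)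
    {A B : α} {i : ℕ} (hc : clen A B i) : clen (f A) (f B) i := by
  obtain ⟨s, h1, h2, h3⟩ := hc
  exact ⟨s.map' f (fun a b hab => (h.apply_covBy_apply_iff f).2 hab),
    by simp [CovSeries.map', RelSeries.head, ← h1]; rfl,
    by simp [CovSeries.map', RelSeries.last, ← h2], h3⟩

lemma range_subtype_emb {α : Type*} [Preorder α] (s : Set α) :
    Set.range ⇑(OrderEmbedding.subtype (· ∈ s)) = s := by
  ext x; exact ⟨fun ⟨y, hy⟩ => hy ▸ y.2, fun hx => ⟨⟨x, hx⟩, rfl⟩⟩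

section modular
variable [IsModularLattice α]

lemma covBy_sup_of_covBy {a b X Y : α} (hab : a ⋖ b) (ha : Y ⊓ X ≤ a) (hb : b ≤ Y) :
    a ⊔ X ⋖ b ⊔ X := by
  have ha' : a ∈ Set.Icc (Y ⊓ X) Y := ⟨ha, hab.le.trans hb⟩
  have hb' : b ∈ Set.Icc (Y ⊓ X) Y := ⟨ha.trans hab.le, hb⟩
  have h1 : (⟨a, ha'⟩ : Set.Icc (Y ⊓ X) Y) ⋖ ⟨b, hb'⟩ := by
    exact (Set.OrdConnected.apply_covBy_apply_iff
      (OrderEmbedding.subtype (· ∈ Set.Icc (Y ⊓ X) Y))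
      (by rw [range_subtype_emb]; exact Set.ordConnected_Icc)).1 hab
  have h2 := (apply_covBy_apply_iff (infIccOrderIsoIccSup Y X)).2 h1
  have h3 := (Set.OrdConnected.apply_covBy_apply_iff
      (OrderEmbedding.subtype (· ∈ Set.Icc X (Y ⊔ X)))
      (by rw [range_subtype_emb]; exact Set.ordConnected_Icc)).2 h2
  simpa [infIccOrderIsoIccSup] using h3

lemma clen_sup [OrderBot α] {X Y : α} {j : ℕ} (h : clen (⊥ : α) Y j) (hXY : Y ⊓ X = ⊥) :
    clen X (Y ⊔ X) j := by
  obtain ⟨s, h1, h2, h3⟩ := h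
  have hle : ∀ i, s.toFun i ≤ Y := by
    intro i
    rw [← h2]
    exact (covSeries_strictMono s).monotone (Fin.le_last i)
  refine ⟨⟨s.length, fun i => s.toFun i ⊔ X, fun i => ?_⟩, ?_, ?_, h3⟩
  · exact covBy_sup_of_covBy (s.step i) (hXY.le.trans bot_le) (hle _)
  · show s.head ⊔ X = X
    rw [h1, bot_sup_eq]
  · show s.last ⊔ X = Y ⊔ X
    rw [h2]

end modular
end aux

section mod
variable {R : Type u} [Ring R] {M N : Type v} [AddCommGroup M] [Module R M]
  [AddCommGroup N] [Module R N]

lemma clen_unique {A B : Submodule R M} {i j : ℕ} (h1 : clen A B i) (h2 : clen A B j) :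
    i = j := by
  obtain ⟨s, hs1, hs2, hs3⟩ := h1
  obtain ⟨t, ht1, ht2, ht3⟩ := h2
  obtain ⟨f, -⟩ := CompositionSeries.jordan_holder (X := Submodule R M) s t
    (hs1.trans ht1.symm) (hs2.trans ht2.symm)
  rw [← hs3, ← ht3]
  exact Fin.equiv_iff_eq.1 ⟨f⟩

lemma clen_smash {A B C : Submodule R M} {i j : ℕ} (h1 : clen A B i) (h2 : clen B C j) :
    clen A C (i + j) := by
  obtain ⟨s, hs1, hs2, hs3⟩ := h1
  obtain ⟨t, ht1, ht2, ht3⟩ := h2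
  exact ⟨s.smash t (hs2.trans ht1.symm), by simp [hs1], by simp [ht2],
    by simp [RelSeries.smash, hs3, ht3]⟩

lemma clen_of_hasLength (W : Submodule R M) {i : ℕ} (h : hasLength R W i) :
    clen (⊥ : Submodule R M) W i := by
  have := clen_map (MapSubtype.orderEmbedding W) (A := ⊥) (B := ⊤) (i := i) ?_ h
  · simpa [map_subtype_embedding_eq, Submodule.map_bot, Submodule.map_subtype_top] using this
  · have : Set.range (MapSubtype.orderEmbedding W) = Set.Iic W := by
      ext q
      constructor
      · rintro ⟨p, rfl⟩; exact map_subtype_le W p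
      · intro hq
        refine ⟨comap W.subtype q, ?_⟩
        rw [map_subtype_embedding_eq, Submodule.map_comap_subtype, inf_eq_right.2 hq]
    rw [this]; exact Set.ordConnected_Iic

lemma clen_quot (A : Submodule R M) {j : ℕ} (h : hasLength R (M ⧸ A) j) :
    clen A (⊤ : Submodule R M) j := by
  have := clen_map (comapMkQOrderEmbedding A) (A := ⊥) (B := ⊤) (i := j) ?_ h
  · simpa [comapMkQOrderEmbedding_eq, Submodule.comap_bot, Submodule.ker_mkQ] using this
  · have : Set.range (comapMkQOrderEmbedding A) = Set.Ici A := by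
      ext q
      constructor
      · rintro ⟨p, rfl⟩
        rw [comapMkQOrderEmbedding_eq]
        exact le_comap_mkQ A p
      · intro hq
        exact ⟨map A.mkQ q, by simp [comapMkQOrderEmbedding_eq, Submodule.comap_map_mkQ,
          sup_eq_right.2 (show A ≤ q from hq)]⟩
    rw [this]; exact Set.ordConnected_Ici

lemma hasLength_congr (e : M ≃ₗ[R] N) {i : ℕ} (h : hasLength R M i) : hasLength R N i := by
  have := clen_map (orderIsoMapComap e).toOrderEmbedding (A := ⊥) (B := ⊤) (i := i) ?_ h
  · exact (by simpa [Submodule.map_bot, orderIsoMapComap_apply, Submodule.map_top,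
      LinearEquiv.range] using this : clen (⊥ : Submodule R N) ⊤ i)
  · have : Set.range ((orderIsoMapComap e).toOrderEmbedding :
        Submodule R M → Submodule R N) = Set.univ :=
      (orderIsoMapComap e).surjective.range_eq
    rw [this]; exact Set.ordConnected_univ

lemma hasLength_iff_clen {i : ℕ} : hasLength R M i ↔ clen (⊥ : Submodule R M) ⊤ i := Iff.rfl

lemma hasLength_subsingleton [Subsingleton M] : hasLength R M 0 :=
  ⟨RelSeries.singleton _ ⊥, rfl, Subsingleton.elim _ _, rfl⟩

lemma hasLength_simple (h : IsSimpleModule R M) : hasLength R M 1 :=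
  ⟨⟨1, fun i => if i = 0 then ⊥ else ⊤, fun i => by
    have : IsSimpleOrder (Submodule R M) := h.toIsSimpleOrder
    have h0 : i.castSucc = 0 := Fin.ext (by simpa using Nat.lt_one_iff.1 i.2)
    have h1 : i.succ ≠ 0 := Fin.succ_ne_zero i
    simp only [h0, h1, if_pos rfl, if_neg h1]
    exact bot_covBy_top⟩,
    rfl, rfl, rfl⟩

lemma clen_sup_add {X Y : Submodule R M} {a b : ℕ} (hX : clen ⊥ X a) (hY : clen ⊥ Y b)
    (hXY : X ⊓ Y = ⊥) : clen ⊥ (X ⊔ Y) (a + b) := by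
  have := clen_sup hY (by rwa [inf_comm])
  rw [sup_comm Y X] at this
  exact clen_smash hX this

lemma hasLength_prod {a b : ℕ} (hM : hasLength R M a) (hN : hasLength R N b) :
    hasLength R (M × N) (a + b) := by
  rw [hasLength_iff_clen, ← Submodule.fst_sup_snd R M N]
  exact clen_sup_add
    (clen_of_hasLength _ (hasLength_congr (Submodule.fstEquiv R M N).symm hM))
    (clen_of_hasLength _ (hasLength_congr (Submodule.sndEquiv R M N).symm hN))
    (Submodule.fst_inf_snd R M N)

lemma isFiniteLength_of_hasLength {i : ℕ} (h : hasLength R M i) : IsFiniteLength R M := by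
  obtain ⟨s, h1, h2, -⟩ := h
  exact isFiniteLength_of_exists_compositionSeries ⟨s, h1, h2⟩

lemma exists_clen_bot [IsNoetherian R M] [IsArtinian R M] (A : Submodule R M) :
    ∃ i, clen (⊥ : Submodule R M) A i := by
  obtain ⟨s, hh1, hh2⟩ := exists_compositionSeries_of_isNoetherian_isArtinian R A
  exact ⟨s.length, clen_of_hasLength A ⟨s, hh1, hh2, rfl⟩⟩

lemma exists_clen_top [IsNoetherian R M] [IsArtinian R M] (A : Submodule R M) :
    ∃ i, clen A (⊤ : Submodule R M) i := by
  obtain ⟨s, hh1, hh2⟩ := exists_compositionSeries_of_isNoetherian_isArtinian R (M ⧸ A)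
  exact ⟨s.length, clen_quot A ⟨s, hh1, hh2, rfl⟩⟩

lemma eq_top_of_clen [IsNoetherian R M] [IsArtinian R M] {A : Submodule R M} {c : ℕ}
    (hA : clen ⊥ A c) (hT : clen (⊥ : Submodule R M) ⊤ c) : A = ⊤ := by
  obtain ⟨j, hj⟩ := exists_clen_top A
  have h := clen_unique (clen_smash hA hj) hT
  have hj0 : j = 0 := by omega
  exact clen_zero (hj0 ▸ hj)

end mod

/-- splitting off the first coordinate of a finite pi type -/
def piFinSuccLequiv (R : Type u) [Ring R] {r : ℕ} (φ : Fin (r + 1) → Type v)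
    [∀ i, AddCommGroup (φ i)] [∀ i, Module R (φ i)] :
    (∀ i, φ i) ≃ₗ[R] φ 0 × (∀ i : Fin r, φ i.succ) where
  toFun f := (f 0, fun i => f i.succ)
  invFun p := Fin.cons p.1 p.2
  map_add' _ _ := rfl
  map_smul' _ _ := rfl
  left_inv f := by
    ext i
    refine Fin.cases ?_ (fun j => ?_) i <;> simp
  right_inv p := by
    ext i <;> simp

lemma hasLength_pi (R : Type u) [Ring R] {r : ℕ} (φ : Fin r → Type v)
    [∀ i, AddCommGroup (φ i)] [∀ i, Module R (φ i)] (c : Fin r → ℕ)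
    (h : ∀ i, hasLength R (φ i) (c i)) : hasLength R (∀ i, φ i) (∑ i, c i) := by
  induction r with
  | zero => simpa using hasLength_subsingleton
  | succ m ih =>
    rw [Fin.sum_univ_succ]
    exact hasLength_congr (piFinSuccLequiv R φ).symm
      (hasLength_prod (h 0) (ih _ _ (fun i => h i.succ)))

lemma hasLength_fin_fun (R : Type u) [Ring R] {T : Type v} [AddCommGroup T] [Module R T]
    (h : IsSimpleModule R T) (m : ℕ) : hasLength R (Fin m → T) m := by
  have := hasLength_pi R (fun _ : Fin m => T) (fun _ => 1) (fun _ => hasLength_simple h)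
  simpa using this

/-- If `V` is a semisimple module of composition length `2k` in which some simple
module occurs with odd multiplicity (witnessed by a decomposition
`V ≅ n₁T₁ ⊕ ⋯ ⊕ n_rT_r` with `∑ nᵢ = 2k` and some `nᵢ` odd), then among any three
submodules of composition length `k`, two have nonzero intersection. -/
theorem stmt19 (R : Type u) [Ring R] (V : Type v) [AddCommGroup V] [Module R V]
    [IsSemisimpleModule R V] (k : ℕ) (hk : 0 < k)
    (r : ℕ) (T : Fin r → Type v) [∀ i, AddCommGroup (T i)] [∀ i, Module R (T i)]
    (hT : ∀ i, IsSimpleModule R (T i))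
    (hTne : ∀ i j, i ≠ j → ¬ Nonempty (T i ≃ₗ[R] T j))
    (n : Fin r → ℕ) (hn : ∀ i, 0 < n i)
    (e : V ≃ₗ[R] Π i, (Fin (n i) → T i))
    (hlen : ∑ i, n i = 2 * k) (hodd : ∃ i, Odd (n i))
    (W₁ W₂ W₃ : Submodule R V)
    (h1 : hasLength R W₁ k) (h2 : hasLength R W₂ k) (h3 : hasLength R W₃ k) :
    W₁ ⊓ W₂ ≠ ⊥ ∨ W₁ ⊓ W₃ ≠ ⊥ ∨ W₂ ⊓ W₃ ≠ ⊥ := by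
  classical
  by_contra hcon
  push_neg at hcon
  obtain ⟨e12, e13, e23⟩ := hcon
  obtain ⟨i₀, hoddi⟩ := hodd
  have hV : hasLength R V (2 * k) := by
    rw [← hlen]
    exact hasLength_congr e.symm (hasLength_pi R _ n fun i => hasLength_fin_fun R (hT i) (n i))
  have hFL : IsFiniteLength R V := isFiniteLength_of_hasLength hV
  haveI hNoe : IsNoetherian R V := (isFiniteLength_iff_isNoetherian_isArtinian.mp hFL).1
  haveI hArt : IsArtinian R V := (isFiniteLength_iff_isNoetherian_isArtinian.mp hFL).2
  have hc1 := clen_of_hasLength W₁ h1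
  have hc2 := clen_of_hasLength W₂ h2
  have hc3 := clen_of_hasLength W₃ h3
  have hVclen : clen (⊥ : Submodule R V) ⊤ (k + k) := by rw [← two_mul]; exact hV
  have hsup : ∀ {Wa Wb : Submodule R V}, clen ⊥ Wa k → clen ⊥ Wb k → Wa ⊓ Wb = ⊥ →
      Wa ⊔ Wb = ⊤ := fun hA hB hI => eq_top_of_clen (clen_sup_add hA hB hI) hVclen
  have h12 := hsup hc1 hc2 e12
  have h13 := hsup hc1 hc3 e13
  have h23 := hsup hc2 hc3 e23
  haveI := hT i₀
  -- the isotypic component of type `T i₀`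
  set S : Submodule R V :=
    ⨆ X : {X : Submodule R V // Nonempty (X ≃ₗ[R] T i₀)}, (X : Submodule R V) with hSdef
  have hSle : ∀ X : Submodule R V, Nonempty (X ≃ₗ[R] T i₀) → X ≤ S := fun X hX =>
    le_iSup (fun Y : {X : Submodule R V // Nonempty (X ≃ₗ[R] T i₀)} =>
      (Y : Submodule R V)) ⟨X, hX⟩
  -- `S` is fully invariant
  have hinv : ∀ φ : V →ₗ[R] V, Submodule.map φ S ≤ S := by
    intro φ
    rw [hSdef, Submodule.map_iSup]
    refine iSup_le ?_
    rintro ⟨X, ⟨g⟩⟩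
    haveI : IsSimpleModule R X := IsSimpleModule.congr g
    have hrange : Submodule.map φ X = LinearMap.range (φ ∘ₗ X.subtype) := by
      rw [LinearMap.range_comp, Submodule.range_subtype]
    rcases eq_bot_or_eq_top (LinearMap.ker (φ ∘ₗ X.subtype)) with hker | hker
    · have hinj : Function.Injective (φ ∘ₗ X.subtype) := LinearMap.ker_eq_bot.1 hker
      refine le_trans (le_of_eq hrange) (hSle _ ⟨?_⟩)
      exact (LinearEquiv.ofInjective _ hinj).symm.trans g
    · have hz : (φ ∘ₗ X.subtype) = 0 := LinearMap.ker_eq_top.1 hker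
      rw [hrange, hz, LinearMap.range_zero]
      exact bot_le
  -- decomposition of `S` along a complemented pair
  have hdecS : ∀ Wa Wb : Submodule R V, Wa ⊓ Wb = ⊥ → Wa ⊔ Wb = ⊤ →
      (S ⊓ Wa) ⊔ (S ⊓ Wb) = S := by
    intro Wa Wb hI hSup
    have hcompl : IsCompl Wa Wb := ⟨disjoint_iff.2 hI, codisjoint_iff.2 hSup⟩
    refine le_antisymm (sup_le inf_le_left inf_le_left) fun x hx => ?_
    have hu : (Wa.subtype ∘ₗ Wa.linearProjOfIsCompl Wb hcompl) x ∈ S :=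
      hinv _ ⟨x, hx, rfl⟩
    have hv : (Wb.subtype ∘ₗ Wb.linearProjOfIsCompl Wa hcompl.symm) x ∈ S :=
      hinv _ ⟨x, hx, rfl⟩
    have hsum : ((Wa.linearProjOfIsCompl Wb hcompl x : V) +
        (Wb.linearProjOfIsCompl Wa hcompl.symm x : V)) = x :=
      Submodule.projection_add_projection_eq_self hcompl x
    rw [← hsum]
    exact add_mem (Submodule.mem_sup_left ⟨hu, SetLike.coe_mem _⟩)
      (Submodule.mem_sup_right ⟨hv, SetLike.coe_mem _⟩)
  -- identify `S` with the `i₀`-component of the product decomposition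
  set φf : Fin r → Type v := fun i => Fin (n i) → T i with hφf
  set S' : Submodule R (∀ i, φf i) := LinearMap.range (LinearMap.single R φf i₀) with hS'
  have hmemS' : ∀ f : ∀ i, φf i, f ∈ S' ↔ ∀ i, i ≠ i₀ → f i = 0 := by
    intro f
    constructor
    · rintro ⟨g, rfl⟩ i hi
      show Pi.single i₀ g i = 0
      exact Pi.single_eq_of_ne hi g
    · intro h
      refine ⟨f i₀, funext fun i => ?_⟩
      show Pi.single i₀ (f i₀) i = f i
      rcases eq_or_ne i i₀ with rfl | hi
      · simp
      · rw [Pi.single_eq_of_ne hi, h i hi]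
  have hS_le : S ≤ Submodule.comap (e : V →ₗ[R] ∀ i, φf i) S' := by
    rw [hSdef]
    refine iSup_le ?_
    rintro ⟨X, ⟨g⟩⟩ x hx
    haveI : IsSimpleModule R X := IsSimpleModule.congr g
    rw [Submodule.mem_comap]
    refine (hmemS' _).2 fun i hi => funext fun j => ?_
    let ρ : X →ₗ[R] T i :=
      (LinearMap.proj j) ∘ₗ (LinearMap.proj i) ∘ₗ (e : V →ₗ[R] ∀ i, φf i) ∘ₗ X.subtype
    haveI := hT i
    rcases LinearMap.bijective_or_eq_zero ρ with hbij | hzero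
    · exact absurd ⟨g.symm.trans (LinearEquiv.ofBijective ρ hbij)⟩ (hTne i₀ i (Ne.symm hi))
    · have hz : ρ ⟨x, hx⟩ = 0 := by rw [hzero]; rfl
      exact hz
  have hS'_le : S' ≤ ⨆ j : Fin (n i₀), LinearMap.range ((LinearMap.single R φf i₀) ∘ₗ
      (LinearMap.single R (fun _ : Fin (n i₀) => T i₀) j)) := by
    rintro f ⟨g, rfl⟩
    have hrep : (LinearMap.single R φf i₀) g = ∑ j : Fin (n i₀),
        ((LinearMap.single R φf i₀) ∘ₗ (LinearMap.single R (fun _ : Fin (n i₀) => T i₀) j))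
          (g j) := by
      simp only [LinearMap.coe_comp, Function.comp_apply]
      rw [← map_sum]
      congr 1
      funext j'
      rw [Finset.sum_apply]
      exact (Fintype.sum_pi_single j' g).symm
    rw [hrep]
    exact Submodule.sum_mem _ fun j _ => Submodule.mem_iSup_of_mem j ⟨g j, rfl⟩
  have hcomap_le : Submodule.comap (e : V →ₗ[R] ∀ i, φf i) S' ≤ S := by
    rw [Submodule.comap_equiv_eq_map_symm]
    refine le_trans (Submodule.map_mono hS'_le) ?_
    rw [Submodule.map_iSup]
    refine iSup_le fun j => hSle _ ⟨?_⟩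
    have hμinj : Function.Injective ((LinearMap.single R φf i₀) ∘ₗ
        (LinearMap.single R (fun _ : Fin (n i₀) => T i₀) j)) := by
      rw [LinearMap.coe_comp]
      have i1 : Function.Injective (LinearMap.single R φf i₀) := Pi.single_injective _
      have i2 : Function.Injective (LinearMap.single R (fun _ : Fin (n i₀) => T i₀) j) := by
        rw [LinearMap.coe_single]
        exact Pi.single_injective _
      exact i1.comp i2
    exact (Submodule.equivMapOfInjective _ e.symm.injective _).symm.trans
      (LinearEquiv.ofInjective _ hμinj).symm
  have hSeq : Submodule.map (e.symm : (∀ i, φf i) →ₗ[R] V) S' = S := by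
    rw [← Submodule.comap_equiv_eq_map_symm]
    exact le_antisymm hcomap_le hS_le
  -- length of `S` is `n i₀`
  have hlenS : hasLength R S (n i₀) := by
    have hfin : hasLength R (Fin (n i₀) → T i₀) (n i₀) := hasLength_fin_fun R (hT i₀) _
    have hsinj : Function.Injective (LinearMap.single R φf i₀) := Pi.single_injective _
    exact hasLength_congr ((LinearEquiv.ofInjective _ hsinj).trans
      ((Submodule.equivMapOfInjective _ e.symm.injective S').trans
        (LinearEquiv.ofEq _ _ hSeq))) hfin
  have hSclen : clen (⊥ : Submodule R V) S (n i₀) := clen_of_hasLength S hlenS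
  -- count multiplicities
  obtain ⟨a, ha⟩ := exists_clen_bot (S ⊓ W₁)
  obtain ⟨b, hb⟩ := exists_clen_bot (S ⊓ W₂)
  obtain ⟨c, hc⟩ := exists_clen_bot (S ⊓ W₃)
  have key : ∀ (Wa Wb : Submodule R V) (p q : ℕ), clen ⊥ (S ⊓ Wa) p → clen ⊥ (S ⊓ Wb) q →
      Wa ⊓ Wb = ⊥ → Wa ⊔ Wb = ⊤ → p + q = n i₀ := by
    intro Wa Wb p q hp hq hI hSup
    have hI' : (S ⊓ Wa) ⊓ (S ⊓ Wb) = ⊥ :=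
      le_bot_iff.1 (le_trans (inf_le_inf inf_le_right inf_le_right) hI.le)
    have := clen_sup_add hp hq hI'
    rw [hdecS Wa Wb hI hSup] at this
    exact clen_unique this hSclen
  have hab := key W₁ W₂ a b ha hb e12 h12
  have hac := key W₁ W₃ a c ha hc e13 h13
  have hbc := key W₂ W₃ b c hb hc e23 h23
  obtain ⟨m, hm⟩ := hoddi
  omega
end
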